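/- arXiv:2007.01175 — 4 statements merged into one kernel-verified Lean document; each statement's English description precedes it below -/
import Mathlib

section
/- (Katriel's formula for CCR operators, algebraic version.) Let V be a vector space and suppose for each ξ : X → ℝ (X finite, with reference measure σ) we have linear operators a⁺(ξ), a⁻(ξ) ∈ End(V), linear in ξ, satisfying [a⁺(φ),a⁺(ξ)] = [a⁻(φ),a⁻(ξ)] = 0 and [a⁻(φ),a⁺(ξ)] = Σ_x φ(x)ξ(x)σ({x})·Id. Define a⁺(x), a⁻(x) by a^±(ξ) = Σ_x ξ(x) a^±(x) σ({x}) and ρ(ξ) = Σ_x ξ(x) a⁺(x)a⁻(x) σ({x}). Then for all ξ₁,…,ξ_n, the product ρ(ξ₁)⋯ρ(ξ_n) equals Σ_{k=1}^{n} Σ_{x₁,…,x_k ∈ X} (S(n,k)(ξ₁⊙⋯⊙ξ_n))(x₁,…,x_k) · a⁺(x₁)⋯a⁺(x_k)a⁻(x_k)⋯a⁻(x₁) · σ({x₁})⋯σ({x_k}). -/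
open Finset

section Defs

variable {X : Type*} [Fintype X] [DecidableEq X]

/-- The falling factorial measure `(ω)_n` on `X^n`, given by the density
`(ω)_n(y₁,…,y_n) = ω(y₁)(ω(y₂)−δ_{y₁}(y₂))⋯(ω(y_n)−δ_{y₁}(y_n)−⋯−δ_{y_{n−1}}(y_n))`. -/
noncomputable def ff (ω : X → ℝ) : (n : ℕ) → (Fin n → X) → ℝ
  | 0 => fun _ => 1
  | n + 1 => fun y =>
      ff ω n (fun i => y i.castSucc) *
        (ω (y (Fin.last n)) - ∑ i : Fin n, if y i.castSucc = y (Fin.last n) then (1 : ℝ) else 0)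

/-- Dirac measure at `x`. -/
noncomputable def diracMeas (x : X) : X → ℝ := fun a => if a = x then 1 else 0

/-- The measure `δ_{x₁}+⋯+δ_{x_k}` of a multiset `[x₁,…,x_k]`. -/
noncomputable def msMeas {k : ℕ} (x : Fin k → X) : X → ℝ :=
  fun a => ((Finset.univ.filter (fun i => x i = a)).card : ℝ)

/-- Integration `⟨μ, f⟩` of a function against a measure on `X^n`. -/
noncomputable def pairing (n : ℕ) (μ f : (Fin n → X) → ℝ) : ℝ :=
  ∑ y : Fin n → X, μ y * f y

/-- Symmetrization of a function/measure on `X^n`. -/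
noncomputable def symmFun (n : ℕ) (μ : (Fin n → X) → ℝ) : (Fin n → X) → ℝ :=
  fun y => (∑ π : Equiv.Perm (Fin n), μ (y ∘ π)) / n.factorial

/-- Tensor product of measures/functions on `X^k` and `X^m`. -/
noncomputable def tensFun {k m : ℕ} (μ : (Fin k → X) → ℝ) (ν : (Fin m → X) → ℝ) :
    (Fin (k + m) → X) → ℝ :=
  fun y => μ (fun i => y (Fin.castAdd m i)) * ν (fun j => y (Fin.natAdd k j))

/-- Re-indexing along an equality of dimensions. -/
def castFun {m n : ℕ} (h : m = n) (μ : (Fin m → X) → ℝ) : (Fin n → X) → ℝ :=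
  fun y => μ (fun i => y (Fin.cast h i))

/-- The product measure `ω^{⊗n}` (and likewise the tensor power `ξ^{⊗n}` of a function). -/
noncomputable def prodMeas (ω : X → ℝ) (n : ℕ) : (Fin n → X) → ℝ :=
  fun y => ∏ i, ω (y i)

/-- A function on `X^n` is symmetric. -/
def IsSymmFun {n : ℕ} (f : (Fin n → X) → ℝ) : Prop :=
  ∀ (π : Equiv.Perm (Fin n)) (y : Fin n → X), f (y ∘ π) = f y

end Defs

/-- The set of surjections `Fin n → Fin k`; these correspond to set partitions of
`{1,…,n}` into `k` nonempty blocks together with an ordering of the blocks. -/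
noncomputable def surjs (n k : ℕ) : Finset (Fin n → Fin k) :=
  Finset.univ.filter (fun g => Function.Surjective g)

/-- Cardinality of the fiber `g⁻¹(i)` (the size of block `i`). -/
def fiberCard {n k : ℕ} (g : Fin n → Fin k) (i : Fin k) : ℕ :=
  (Finset.univ.filter (fun j => g j = i)).card

section Ops

variable {X : Type*} [Fintype X] [DecidableEq X]

/-- Stirling operator of the second kind `S(n,k) = Σ_{λ ∈ UP(n,k)} D_λ`:
summing the substitute-and-symmetrize operators over unordered partitions of `{1,…,n}`
into `k` nonempty blocks is the same as summing `f(y ∘ g)` over the surjections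
`g : Fin n → Fin k` and dividing by `k!`. -/
noncomputable def Sop (n k : ℕ) (f : (Fin n → X) → ℝ) : (Fin k → X) → ℝ :=
  fun y => (∑ g ∈ surjs n k, f (y ∘ g)) / k.factorial

/-- Unsigned Stirling operator of the first kind
`c(n,k) = Σ_{λ={λ₁,…,λ_k} ∈ UP(n,k)} (|λ₁|−1)!⋯(|λ_k|−1)! · D_λ`. -/
noncomputable def cop (n k : ℕ) (f : (Fin n → X) → ℝ) : (Fin k → X) → ℝ :=
  fun y => (∑ g ∈ surjs n k, (∏ i : Fin k, ((fiberCard g i - 1).factorial : ℝ)) * f (y ∘ g)) /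
    k.factorial

/-- Stirling operator of the first kind `s(n,k) = (−1)^{n−k} c(n,k)`. -/
noncomputable def sop (n k : ℕ) (f : (Fin n → X) → ℝ) : (Fin k → X) → ℝ :=
  fun y => (-1 : ℝ) ^ (n - k) * cop n k f y

/-- Lah operator `L(n,k) = Σ_{λ={λ₁,…,λ_k} ∈ UP(n,k)} |λ₁|!⋯|λ_k|! · D_λ`. -/
noncomputable def Lop (n k : ℕ) (f : (Fin n → X) → ℝ) : (Fin k → X) → ℝ :=
  fun y => (∑ g ∈ surjs n k, (∏ i : Fin k, ((fiberCard g i).factorial : ℝ)) * f (y ∘ g)) /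
    k.factorial

end Ops


open Finset

set_option linter.unusedSectionVars false

lemma pairwise_all {M : Type*} {R : M → M → Prop} (h : ∀ a b, R a b) : ∀ l : List M, l.Pairwise R
  | [] => List.Pairwise.nil
  | a :: l => List.Pairwise.cons (fun b _ => h a b) (pairwise_all h l)

section Aux
variable {X : Type*} [DecidableEq X] {M : Type*} [Monoid M]

lemma prod_map_perm_comm {C : X → M} (hC : ∀ a b, Commute (C a) (C b))
    {l₁ l₂ : List X} (h : l₁.Perm l₂) : (l₁.map C).prod = (l₂.map C).prod :=
  List.Perm.prod_eq' (List.Perm.map C h) (List.pairwise_map.mpr (pairwise_all (fun a b => hC a b) l₁))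

lemma finRange_map_perm {n : ℕ} (π : Equiv.Perm (Fin n)) :
    ((List.finRange n).map π).Perm (List.finRange n) := by
  apply List.Perm.symm
  apply List.perm_of_nodup_nodup_toFinset_eq (List.nodup_finRange n)
    (List.Nodup.map π.injective (List.nodup_finRange n))
  ext a
  simp only [List.mem_toFinset, List.mem_finRange, true_iff, List.mem_map]
  exact ⟨π.symm a, by simp⟩

/-- `ofFn (f ∘ π)` is a permutation of `ofFn f`. -/
lemma ofFn_comp_perm {n : ℕ} (f : Fin n → X) (π : Equiv.Perm (Fin n)) :
    (List.ofFn (fun i => f (π i))).Perm (List.ofFn f) := by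
  rw [List.ofFn_eq_map, List.ofFn_eq_map]
  have : List.map (fun i => f (π i)) (List.finRange n) = List.map f ((List.finRange n).map π) := by
    rw [List.map_map]; rfl
  rw [this]
  exact List.Perm.map f (finRange_map_perm π)

lemma prod_ofFn_comp_perm {C : X → M} (hC : ∀ a b, Commute (C a) (C b)) {n : ℕ}
    (f : Fin n → X) (π : Equiv.Perm (Fin n)) :
    (List.ofFn (fun i => C (f (π i)))).prod = (List.ofFn (fun i => C (f i))).prod := by
  have h1 : List.ofFn (fun i => C (f (π i))) = (List.ofFn (fun i => f (π i))).map C := by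
    rw [List.map_ofFn]; rfl
  have h2 : List.ofFn (fun i => C (f i)) = (List.ofFn f).map C := by
    rw [List.map_ofFn]; rfl
  rw [h1, h2]
  exact prod_map_perm_comm hC (ofFn_comp_perm f π)

end Aux
open Finset

section Aux2
variable {X : Type*} [Fintype X] [DecidableEq X] {V : Type*} [AddCommGroup V] [Module ℝ V]
variable {σ : X → ℝ} {A B : X → Module.End ℝ V}

lemma sum_count_mul (φ : X → ℝ) : ∀ l : List X, (∑ y : X, φ y * (l.count y : ℝ)) = (l.map φ).sum
  | [] => by simp
  | a :: l => by
    simp only [List.count_cons, List.map_cons, List.sum_cons, ← sum_count_mul φ l]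
    push_cast
    simp only [mul_add, Finset.sum_add_distrib]
    rw [add_comm]
    congr 1
    simp only [mul_ite, mul_one, mul_zero, beq_iff_eq]
    rw [Finset.sum_ite_eq Finset.univ a (fun y => φ y)]
    simp

lemma contractB (hBB : ∀ x y, B x * B y = B y * B x)
    (hBA : ∀ x y, B x * A y - A y * B x = if x = y then (σ x)⁻¹ • (1 : Module.End ℝ V) else 0) :
    ∀ (l : List X) (y : X),
      (l.map B).prod * A y
        = A y * (l.map B).prod + ((l.count y : ℝ) * (σ y)⁻¹) • ((l.erase y).map B).prod
  | [], y => by simp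
  | a :: l, y => by
    have hba : B a * A y = A y * B a + if a = y then (σ a)⁻¹ • (1 : Module.End ℝ V) else 0 := by
      have := hBA a y; linear_combination (norm := module) this
    have IH := contractB hBB hBA l y
    simp only [List.map_cons, List.prod_cons, mul_assoc, IH]
    rw [mul_add, ← mul_assoc (B a) (A y), hba]
    by_cases h : a = y
    · subst h
      simp only [if_pos rfl, List.erase_cons_head, List.count_cons_self]
      by_cases hm : a ∈ l
      · have hperm : ((a :: l.erase a).map B).prod = (l.map B).prod :=
          prod_map_perm_comm (fun x y => hBB x y) (List.perm_cons_erase hm).symm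
        have hBa : B a * ((l.erase a).map B).prod = (l.map B).prod := by
          rw [← hperm]; simp [List.map_cons, List.prod_cons]
        rw [mul_smul_comm, hBa]
        push_cast
        simp only [smul_mul_assoc, one_mul, mul_assoc, add_mul, add_smul, one_smul]
        abel
      · have hc : l.count a = 0 := List.count_eq_zero.mpr hm
        simp [hc, add_mul, smul_mul_assoc]
        abel
    · have hne : ¬((a : X) == y) = true := by simp [h]
      rw [if_neg h, List.erase_cons_tail (by simp [h])]
      simp only [List.count_cons, beq_iff_eq, if_neg h, add_zero, List.map_cons, List.prod_cons]
      rw [mul_smul_comm]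
      rw [mul_assoc]

end Aux2

/-- `snoc` specialized to non-dependent functions. -/
def snf {X : Type*} {k : ℕ} (x : Fin k → X) (y : X) : Fin (k + 1) → X := Fin.snoc x y

lemma snf_castSucc {X : Type*} {k : ℕ} (x : Fin k → X) (y : X) (i : Fin k) :
    snf x y i.castSucc = x i := Fin.snoc_castSucc ..

lemma snf_last {X : Type*} {k : ℕ} (x : Fin k → X) (y : X) :
    snf x y (Fin.last k) = y := Fin.snoc_last ..

section Aux3
variable {X : Type*} [Fintype X] [DecidableEq X] {V : Type*} [AddCommGroup V] [Module ℝ V]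
variable {σ : X → ℝ} {A B : X → Module.End ℝ V}

lemma W_mul_rho (hσ : ∀ x, σ x ≠ 0)
    (hAA : ∀ x y, A x * A y = A y * A x)
    (hBB : ∀ x y, B x * B y = B y * B x)
    (hBA : ∀ x y, B x * A y - A y * B x = if x = y then (σ x)⁻¹ • (1 : Module.End ℝ V) else 0)
    {k : ℕ} (x : Fin k → X) (φ : X → ℝ) :
    ((List.ofFn fun i => A (x i)).prod * (List.ofFn fun i => B (x i)).prod)
        * (∑ y, (φ y * σ y) • (A y * B y))
      = (∑ y, (φ y * σ y) •
          ((List.ofFn fun i => A (snf x y i)).prod *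
            (List.ofFn fun i => B (snf x y i)).prod))
        + (∑ i, φ (x i)) •
          ((List.ofFn fun i => A (x i)).prod * (List.ofFn fun i => B (x i)).prod) := by
  have hmapB : ∀ {m : ℕ} (z : Fin m → X), (List.ofFn fun i => B (z i)) = (List.ofFn z).map B := by
    intro m z; rw [List.map_ofFn]; rfl
  rw [Finset.mul_sum]
  have hterm : ∀ y : X,
      ((List.ofFn fun i => A (x i)).prod * (List.ofFn fun i => B (x i)).prod)
          * ((φ y * σ y) • (A y * B y))
        = (φ y * σ y) • ((List.ofFn fun i => A (snf x y i)).prod *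
            (List.ofFn fun i => B (snf x y i)).prod)
          + (φ y * (((List.ofFn x).count y : ℝ))) •
            ((List.ofFn fun i => A (x i)).prod * (List.ofFn fun i => B (x i)).prod) := by
    intro y
    rw [mul_smul_comm]
    have hsnocA : (List.ofFn fun i => A (snf x y i)).prod
        = (List.ofFn fun i => A (x i)).prod * A y := by
      rw [List.ofFn_succ']
      simp only [snf_castSucc, snf_last, List.prod_concat]
    have hsnocB : (List.ofFn fun i => B (snf x y i)).prod
        = (List.ofFn fun i => B (x i)).prod * B y := by
      rw [List.ofFn_succ']
      simp only [snf_castSucc, snf_last, List.prod_concat]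
    rw [hsnocA, hsnocB]
    have hc := contractB (σ := σ) hBB hBA (List.ofFn x) y
    rw [hmapB x]
    have expand : (List.ofFn fun i => A (x i)).prod * ((List.ofFn x).map B).prod * (A y * B y)
        = (List.ofFn fun i => A (x i)).prod * (((List.ofFn x).map B).prod * A y) * B y := by
      noncomm_ring
    rw [expand, hc]
    rw [mul_add, mul_smul_comm, add_mul, smul_mul_assoc, smul_add, smul_smul]
    simp only [mul_assoc]
    congr 1
    -- contraction term
    by_cases hm : y ∈ List.ofFn x
    · have hperm : ((((List.ofFn x).erase y) ++ [y]).map B).prod = ((List.ofFn x).map B).prod :=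
        prod_map_perm_comm (fun a b => hBB a b)
          ((List.perm_append_singleton y _).trans (List.perm_cons_erase hm).symm)
      have hBy : (((List.ofFn x).erase y).map B).prod * B y = ((List.ofFn x).map B).prod := by
        rw [← hperm]; simp
      rw [hBy]
      congr 1
      have h0 : σ y ≠ 0 := hσ y
      field_simp
    · have hc0 : (List.ofFn x).count y = 0 := List.count_eq_zero.mpr hm
      simp [hc0]
  rw [Finset.sum_congr rfl (fun y _ => hterm y), Finset.sum_add_distrib]
  congr 1
  rw [← Finset.sum_smul]
  congr 1
  rw [sum_count_mul φ (List.ofFn x)]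
  rw [List.map_ofFn, List.sum_ofFn]
  rfl

end Aux3

section Aux4

open Finset

/-- Composing with a permutation is invariant on sums over surjections. -/
lemma sum_surjs_comp_perm {n k : ℕ} (P : (Fin n → Fin k) → ℝ) (π : Equiv.Perm (Fin n)) :
    ∑ g ∈ surjs n k, P (g ∘ π) = ∑ g ∈ surjs n k, P g := by
  apply Finset.sum_nbij' (i := fun g => g ∘ π) (j := fun g => g ∘ π.symm)
  · intro g hg
    simp only [surjs, Finset.mem_filter, Finset.mem_univ, true_and] at hg ⊢
    exact hg.comp π.surjective
  · intro g hg
    simp only [surjs, Finset.mem_filter, Finset.mem_univ, true_and] at hg ⊢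
    exact hg.comp π.symm.surjective
  · intro g _; funext j; simp
  · intro g _; funext j; simp
  · intro g _; rfl

/-- Sums over `surjs n 0` vanish when `n ≥ 1`. -/
lemma sum_surjs_zero {n : ℕ} (hn : 1 ≤ n) (P : (Fin n → Fin 0) → ℝ) :
    ∑ g ∈ surjs n 0, P g = 0 := by
  apply Finset.sum_eq_zero
  intro g _
  exact (g ⟨0, hn⟩).elim0

/-- Sums over `surjs n k` vanish when `k > n`. -/
lemma sum_surjs_gt {n k : ℕ} (h : n < k) (P : (Fin n → Fin k) → ℝ) :
    ∑ g ∈ surjs n k, P g = 0 := by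
  apply Finset.sum_eq_zero
  intro g hg
  simp only [surjs, Finset.mem_filter, Finset.mem_univ, true_and] at hg
  have := Fintype.card_le_of_surjective g hg
  simp at this
  omega

end Aux4

section Aux5
open Finset

/-- Splitting off the last argument of a surjection. -/
lemma surj_decomp (n m : ℕ) (F : Fin (n + 1) → Fin (m + 1) → ℝ) :
    ∑ g' ∈ surjs (n + 1) (m + 1), ∏ j, F j (g' j)
      = (∑ i, F (Fin.last n) i) * (∑ g ∈ surjs n (m + 1), ∏ j, F j.castSucc (g j))
        + ∑ i, F (Fin.last n) i *
            (∑ h ∈ surjs n m, ∏ j, F j.castSucc (i.succAbove (h j))) := by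
  classical
  rw [surjs, Finset.sum_filter]
  let e : ((Fin n → Fin (m + 1)) × Fin (m + 1)) ≃ (Fin (n + 1) → Fin (m + 1)) :=
    { toFun := fun p => snf p.1 p.2
      invFun := fun g' => (fun j => g' j.castSucc, g' (Fin.last n))
      left_inv := by
        intro ⟨g, i⟩
        simp only [Prod.mk.injEq]
        exact ⟨funext fun j => snf_castSucc g i j, snf_last g i⟩
      right_inv := by
        intro g'
        funext j
        induction j using Fin.lastCases with
        | last => exact snf_last _ _
        | cast i => exact snf_castSucc _ _ i }
  rw [← Fintype.sum_equiv e (fun p => if Function.Surjective (snf p.1 p.2) then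
      ∏ j, F j (snf p.1 p.2 j) else 0) _ (fun p => by rfl)]
  rw [Fintype.sum_prod_type]
  have hprod : ∀ (g : Fin n → Fin (m + 1)) (i : Fin (m + 1)),
      (∏ j, F j (snf g i j)) = (∏ j, F j.castSucc (g j)) * F (Fin.last n) i := by
    intro g i
    rw [Fin.prod_univ_castSucc]
    simp [snf_castSucc, snf_last]
  rw [← Finset.sum_filter_add_sum_filter_not Finset.univ (fun g => Function.Surjective g)
    (fun g => ∑ i, if Function.Surjective (snf g i) then ∏ j, F j (snf g i j) else 0)]
  congr 1
  · -- restriction surjective: snoc always surjective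
    have key : ∀ g ∈ Finset.univ.filter (fun g : Fin n → Fin (m + 1) => Function.Surjective g),
        (∑ i, if Function.Surjective (snf g i) then ∏ j, F j (snf g i j) else 0)
          = (∏ j, F j.castSucc (g j)) * (∑ i, F (Fin.last n) i) := by
      intro g hg
      rw [Finset.mem_filter] at hg
      have hgs := hg.2
      have hsnoc : ∀ i, Function.Surjective (snf g i) := by
        intro i c
        obtain ⟨j, hj⟩ := hgs c
        exact ⟨j.castSucc, by rw [snf_castSucc]; exact hj⟩
      rw [Finset.mul_sum]
      apply Finset.sum_congr rfl
      intro i _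
      rw [if_pos (hsnoc i), hprod g i]
    rw [Finset.sum_congr rfl key, ← Finset.sum_mul, mul_comm]
    rfl
  · -- restriction not surjective
    rw [Finset.sum_comm]
    apply Finset.sum_congr rfl
    intro i _
    rw [← Finset.sum_filter, Finset.mul_sum]
    refine (Finset.sum_bij (fun h _ => Fin.succAbove i ∘ h) ?_ ?_ ?_ ?_).symm
    · -- maps into the set
      intro h hh
      rw [surjs, Finset.mem_filter] at hh
      have hhs := hh.2
      rw [Finset.mem_filter, Finset.mem_filter]
      refine ⟨⟨Finset.mem_univ _, ?_⟩, ?_⟩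
      · intro hsurj
        obtain ⟨j, hj⟩ := hsurj i
        exact Fin.succAbove_ne i (h j) hj
      · intro c
        by_cases hc : c = i
        · exact ⟨Fin.last n, by rw [snf_last, hc]⟩
        · obtain ⟨z, hz⟩ := Fin.exists_succAbove_eq hc
          obtain ⟨j, hj⟩ := hhs z
          exact ⟨j.castSucc, by rw [snf_castSucc]; show Fin.succAbove i (h j) = c; rw [hj, hz]⟩
    · -- injective
      intro h₁ hh₁ h₂ hh₂ heq
      funext j
      exact Fin.succAbove_right_injective (congrFun heq j)
    · -- surjective
      intro g hg
      rw [Finset.mem_filter, Finset.mem_filter] at hg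
      obtain ⟨⟨-, hgn⟩, hgs⟩ := hg
      have hne : ∀ j, g j ≠ i := by
        intro j₀ hj₀
        apply hgn
        intro c
        obtain ⟨j', hj'⟩ := hgs c
        induction j' using Fin.lastCases with
        | last => exact ⟨j₀, by rw [hj₀, ← hj', snf_last]⟩
        | cast j => exact ⟨j, by rw [← hj', snf_castSucc]⟩
      choose z hz using fun j => Fin.exists_succAbove_eq (hne j)
      refine ⟨z, ?_, funext fun j => hz j⟩
      rw [surjs, Finset.mem_filter]
      refine ⟨Finset.mem_univ _, fun c => ?_⟩
      obtain ⟨j', hj'⟩ := hgs (i.succAbove c)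
      induction j' using Fin.lastCases with
      | last =>
        rw [snf_last] at hj'
        exact absurd hj'.symm (Fin.succAbove_ne i c)
      | cast j =>
        rw [snf_castSucc] at hj'
        refine ⟨j, Fin.succAbove_right_injective (p := i) ?_⟩
        rw [hz j, hj']
    · -- values agree
      intro h hh
      rw [hprod, mul_comm]
      rfl

end Aux5

section Aux6
open Finset
variable {X : Type*} [Fintype X] [DecidableEq X]

lemma Sop_symmFun (n k : ℕ) (f : (Fin n → X) → ℝ) (y : Fin k → X) :
    Sop n k (symmFun n f) y = Sop n k f y := by
  unfold Sop symmFun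
  congr 1
  have : ∀ g ∈ surjs n k, (∑ π : Equiv.Perm (Fin n), f ((y ∘ g) ∘ π)) / (n.factorial : ℝ)
      = (∑ π : Equiv.Perm (Fin n), f (y ∘ (g ∘ π))) / (n.factorial : ℝ) := fun g _ => rfl
  rw [Finset.sum_congr rfl this, ← Finset.sum_div, Finset.sum_comm]
  have h2 : ∀ π : Equiv.Perm (Fin n), (∑ g ∈ surjs n k, f (y ∘ (g ∘ π)))
      = ∑ g ∈ surjs n k, f (y ∘ g) := by
    intro π
    exact sum_surjs_comp_perm (fun g => f (y ∘ g)) π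
  rw [Finset.sum_congr rfl (fun π _ => h2 π), Finset.sum_const, Finset.card_univ,
    Fintype.card_perm, nsmul_eq_mul, mul_comm, mul_div_assoc]
  rw [Fintype.card_fin, div_self (by exact_mod_cast Nat.factorial_ne_zero n), mul_one]

lemma sum_Icc_one {M : Type*} [AddCommMonoid M] (n : ℕ) (f : ℕ → M) :
    ∑ k ∈ Finset.Icc 1 n, f k = ∑ m ∈ Finset.range n, f (m + 1) := by
  rw [← Finset.Ico_add_one_right_eq_Icc, Finset.sum_Ico_eq_sum_range]
  simp [add_comm]

lemma snf_perm_insertNth {m : ℕ} (i : Fin (m + 1)) (y : X) (x : Fin m → X) (j : Fin (m + 1)) :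
    snf x y (((finSuccEquiv' i).trans (finSuccEquiv' (Fin.last m)).symm) j)
      = Fin.insertNth (α := fun _ => X) i y x j := by
  by_cases hj : j = i
  · subst hj
    have h1 : finSuccEquiv' j j = none := by
      rw [← finSuccEquiv'_symm_none j]
      simp
    simp only [Equiv.trans_apply, h1, finSuccEquiv'_symm_none]
    rw [snf_last, Fin.insertNth_apply_same]
  · obtain ⟨z, hz⟩ := Fin.exists_succAbove_eq hj
    subst hz
    simp only [Equiv.trans_apply, finSuccEquiv'_succAbove, finSuccEquiv'_symm_some]
    rw [Fin.succAbove_last, snf_castSucc, Fin.insertNth_apply_succAbove]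

end Aux6

section Aux7
open Finset
variable {X : Type*} [Fintype X] [DecidableEq X] {V : Type*} [AddCommGroup V] [Module ℝ V]
variable {A B : X → Module.End ℝ V}

lemma W_insertNth (hAA : ∀ x y, A x * A y = A y * A x)
    (hBB : ∀ x y, B x * B y = B y * B x) {m : ℕ} (i : Fin (m + 2)) (y : X) (z : Fin (m + 1) → X) :
    (List.ofFn fun l => A (Fin.insertNth (α := fun _ => X) i y z l)).prod *
        (List.ofFn fun l => B (Fin.insertNth (α := fun _ => X) i y z l)).prod
      = (List.ofFn fun l => A (snf z y l)).prod * (List.ofFn fun l => B (snf z y l)).prod := by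
  have hπ : ∀ l, Fin.insertNth (α := fun _ => X) i y z l
      = snf z y (((finSuccEquiv' i).trans (finSuccEquiv' (Fin.last (m + 1))).symm) l) :=
    fun l => (snf_perm_insertNth i y z l).symm
  have hA : (List.ofFn fun l => A (Fin.insertNth (α := fun _ => X) i y z l))
      = List.ofFn fun l => A (snf z y (((finSuccEquiv' i).trans
          (finSuccEquiv' (Fin.last (m + 1))).symm) l)) := by
    congr 1; funext l; rw [hπ l]
  have hB : (List.ofFn fun l => B (Fin.insertNth (α := fun _ => X) i y z l))
      = List.ofFn fun l => B (snf z y (((finSuccEquiv' i).trans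
          (finSuccEquiv' (Fin.last (m + 1))).symm) l)) := by
    congr 1; funext l; rw [hπ l]
  rw [hA, hB,
    prod_ofFn_comp_perm (fun a b => hAA a b) (snf z y) _,
    prod_ofFn_comp_perm (fun a b => hBB a b) (snf z y) _]

lemma insert_reindex (hAA : ∀ x y, A x * A y = A y * A x)
    (hBB : ∀ x y, B x * B y = B y * B x) {m : ℕ} (i : Fin (m + 2))
    (c : X → (Fin (m + 1) → X) → ℝ) :
    (∑ x : Fin (m + 2) → X, c (x i) (fun j => x (i.succAbove j)) •
        ((List.ofFn fun l => A (x l)).prod * (List.ofFn fun l => B (x l)).prod))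
      = ∑ z : Fin (m + 1) → X, ∑ y : X, c y z •
          ((List.ofFn fun l => A (snf z y l)).prod * (List.ofFn fun l => B (snf z y l)).prod) := by
  rw [← Fintype.sum_equiv (Fin.insertNthEquiv (fun _ => X) i)
    (fun p => c p.1 p.2 • ((List.ofFn fun l => A (snf p.2 p.1 l)).prod *
      (List.ofFn fun l => B (snf p.2 p.1 l)).prod)) _ ?_]
  · rw [Fintype.sum_prod_type, Finset.sum_comm]
  · intro ⟨y, z⟩
    have he : Fin.insertNthEquiv (fun _ => X) i (y, z) = Fin.insertNth (α := fun _ => X) i y z := rfl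
    rw [he]
    have h1 : Fin.insertNth (α := fun _ => X) i y z i = y := Fin.insertNth_apply_same (α := fun _ => X) i y z
    have h2 : (fun j => Fin.insertNth (α := fun _ => X) i y z (i.succAbove j)) = z := by
      funext j; exact Fin.insertNth_apply_succAbove (α := fun _ => X) i y z j
    rw [h1, h2, W_insertNth hAA hBB i y z]

end Aux7

section Aux7b
open Finset
variable {X : Type*} [Fintype X] [DecidableEq X] {V : Type*} [AddCommGroup V] [Module ℝ V]
variable {σ : X → ℝ} {A B : X → Module.End ℝ V}

lemma sumW_mul_rho (hσ : ∀ x, σ x ≠ 0)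
    (hAA : ∀ x y, A x * A y = A y * A x)
    (hBB : ∀ x y, B x * B y = B y * B x)
    (hBA : ∀ x y, B x * A y - A y * B x
      = if x = y then (σ x)⁻¹ • (1 : Module.End ℝ V) else 0)
    {k : ℕ} (c : (Fin k → X) → ℝ) (φ : X → ℝ) :
    (∑ x : Fin k → X, c x •
        ((List.ofFn fun i => A (x i)).prod * (List.ofFn fun i => B (x i)).prod))
      * (∑ y, (φ y * σ y) • (A y * B y))
    = (∑ x : Fin k → X, ∑ y, (c x * (φ y * σ y)) •
        ((List.ofFn fun i => A (snf x y i)).prod * (List.ofFn fun i => B (snf x y i)).prod))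
      + ∑ x : Fin k → X, (c x * ∑ i, φ (x i)) •
        ((List.ofFn fun i => A (x i)).prod * (List.ofFn fun i => B (x i)).prod) := by
  rw [Finset.sum_mul, ← Finset.sum_add_distrib]
  apply Finset.sum_congr rfl
  intro x _
  rw [smul_mul_assoc, W_mul_rho hσ hAA hBB hBA x φ, smul_add, Finset.smul_sum]
  congr 1
  · apply Finset.sum_congr rfl
    intro y _
    rw [smul_smul]
  · rw [smul_smul]

end Aux7b

section Aux8
open Finset
variable {X : Type*} [Fintype X] [DecidableEq X] {V : Type*} [AddCommGroup V] [Module ℝ V]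

lemma katriel_aux (σ : X → ℝ) (hσ : ∀ x, σ x ≠ 0) (A B : X → Module.End ℝ V)
    (hAA : ∀ x y, A x * A y = A y * A x)
    (hBB : ∀ x y, B x * B y = B y * B x)
    (hBA : ∀ x y, B x * A y - A y * B x
      = if x = y then (σ x)⁻¹ • (1 : Module.End ℝ V) else 0) :
    ∀ n, 1 ≤ n → ∀ ξ : Fin n → X → ℝ,
    (List.ofFn (fun j => ∑ x, (ξ j x * σ x) • (A x * B x))).prod
      = ∑ m ∈ Finset.range n, ∑ x : Fin (m + 1) → X,
          (((∑ g ∈ surjs n (m + 1), ∏ j, ξ j (x (g j))) / (m + 1).factorial) * ∏ i, σ (x i)) •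
            ((List.ofFn fun i => A (x i)).prod * (List.ofFn fun i => B (x i)).prod) := by
  intro n hn
  induction n, hn using Nat.le_induction with
  | base =>
    intro ξ
    have hsurj : surjs 1 1 = Finset.univ := by
      ext g
      simp only [surjs, Finset.mem_filter, Finset.mem_univ, true_and, iff_true]
      exact fun c => ⟨c, Subsingleton.elim _ _⟩
    rw [Finset.sum_range_one]
    rw [← Fintype.sum_equiv (Equiv.funUnique (Fin 1) X).symm
      (fun y => (ξ 0 y * σ y) • (A y * B y)) _ ?_]
    · simp [List.ofFn_succ]
    · intro y
      simp [hsurj, Fintype.sum_unique, List.ofFn_succ, Nat.factorial]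
  | succ n hn IH =>
    intro ξ
    have eqA : (∑ m ∈ Finset.range n, ∑ x : Fin (m + 1) → X,
          ((((∑ g ∈ surjs n (m + 1), ∏ j, ξ j.castSucc (x (g j))) / (m + 1).factorial)
            * ∏ i, σ (x i)) * ∑ i, ξ (Fin.last n) (x i)) •
            ((List.ofFn fun i => A (x i)).prod * (List.ofFn fun i => B (x i)).prod))
        = ∑ m ∈ Finset.range (n + 1), ∑ x : Fin (m + 1) → X,
            (((∑ i, ξ (Fin.last n) (x i)) *
                (∑ g ∈ surjs n (m + 1), ∏ j, ξ j.castSucc (x (g j)))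
              / (m + 1).factorial * ∏ i, σ (x i))) •
              ((List.ofFn fun i => A (x i)).prod * (List.ofFn fun i => B (x i)).prod) := by
      rw [Finset.sum_range_succ]
      have hzero : (∑ x : Fin (n + 1) → X,
          (((∑ i, ξ (Fin.last n) (x i)) *
              (∑ g ∈ surjs n (n + 1), ∏ j, ξ j.castSucc (x (g j)))
            / (n + 1).factorial * ∏ i, σ (x i))) •
            ((List.ofFn fun i => A (x i)).prod * (List.ofFn fun i => B (x i)).prod)) = 0 := by
        apply Finset.sum_eq_zero
        intro x _
        have h0 : (∑ g ∈ surjs n (n + 1), ∏ j, ξ j.castSucc (x (g j))) = 0 :=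
          sum_surjs_gt (Nat.lt_succ_self n) _
        rw [h0]
        simp
      rw [hzero, add_zero]
      apply Finset.sum_congr rfl
      intro m _
      apply Finset.sum_congr rfl
      intro x _
      congr 1
      ring
    have eqB : (∑ m ∈ Finset.range n, ∑ x : Fin (m + 1) → X, ∑ y,
          ((((∑ g ∈ surjs n (m + 1), ∏ j, ξ j.castSucc (x (g j))) / (m + 1).factorial)
            * ∏ i, σ (x i)) * (ξ (Fin.last n) y * σ y)) •
            ((List.ofFn fun i => A (snf x y i)).prod *
              (List.ofFn fun i => B (snf x y i)).prod))
        = ∑ m ∈ Finset.range (n + 1), ∑ x : Fin (m + 1) → X,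
            ((∑ i, ξ (Fin.last n) (x i) *
                (∑ h ∈ surjs n m, ∏ j, ξ j.castSucc (x (i.succAbove (h j)))))
              / (m + 1).factorial * ∏ i, σ (x i)) •
              ((List.ofFn fun i => A (x i)).prod * (List.ofFn fun i => B (x i)).prod) := by
      rw [Finset.sum_range_succ']
      have hzero : (∑ x : Fin (0 + 1) → X,
          ((∑ i, ξ (Fin.last n) (x i) *
              (∑ h ∈ surjs n 0, ∏ j, ξ j.castSucc (x (i.succAbove (h j)))))
            / (0 + 1).factorial * ∏ i, σ (x i)) •
            ((List.ofFn fun i => A (x i)).prod * (List.ofFn fun i => B (x i)).prod)) = 0 := by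
        apply Finset.sum_eq_zero
        intro x _
        have h0 : ∀ i : Fin (0 + 1),
            (∑ h ∈ surjs n 0, ∏ j, ξ j.castSucc (x (i.succAbove (h j)))) = 0 :=
          fun i => sum_surjs_zero hn _
        rw [Finset.sum_congr rfl (fun i _ => by rw [h0 i])]
        simp
      rw [hzero, add_zero]
      apply Finset.sum_congr rfl
      intro m hm
      -- fixed m : per-m identity
      symm
      calc (∑ x : Fin (m + 1 + 1) → X,
              ((∑ i, ξ (Fin.last n) (x i) *
                  (∑ h ∈ surjs n (m + 1), ∏ j, ξ j.castSucc (x (i.succAbove (h j)))))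
                / (m + 1 + 1).factorial * ∏ i, σ (x i)) •
                ((List.ofFn fun i => A (x i)).prod * (List.ofFn fun i => B (x i)).prod))
          = ∑ x : Fin (m + 1 + 1) → X, ∑ i : Fin (m + 1 + 1),
              ((ξ (Fin.last n) (x i) *
                  (∑ h ∈ surjs n (m + 1), ∏ j, ξ j.castSucc (x (i.succAbove (h j)))))
                / (m + 1 + 1).factorial * (σ (x i) * ∏ j, σ (x (i.succAbove j)))) •
                ((List.ofFn fun i => A (x i)).prod * (List.ofFn fun i => B (x i)).prod) := by
            apply Finset.sum_congr rfl
            intro x _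
            rw [← Finset.sum_smul]
            congr 1
            rw [Finset.sum_div, Finset.sum_mul]
            apply Finset.sum_congr rfl
            intro i _
            rw [Fin.prod_univ_succAbove (fun l => σ (x l)) i]
          _ = ∑ i : Fin (m + 1 + 1), ∑ x : Fin (m + 1 + 1) → X,
              ((ξ (Fin.last n) (x i) *
                  (∑ h ∈ surjs n (m + 1), ∏ j, ξ j.castSucc (x (i.succAbove (h j)))))
                / (m + 1 + 1).factorial * (σ (x i) * ∏ j, σ (x (i.succAbove j)))) •
                ((List.ofFn fun i => A (x i)).prod * (List.ofFn fun i => B (x i)).prod) :=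
            Finset.sum_comm
          _ = ∑ i : Fin (m + 1 + 1), ∑ z : Fin (m + 1) → X, ∑ y,
              ((ξ (Fin.last n) y *
                  (∑ h ∈ surjs n (m + 1), ∏ j, ξ j.castSucc (z (h j))))
                / (m + 1 + 1).factorial * (σ y * ∏ l, σ (z l))) •
                ((List.ofFn fun l => A (snf z y l)).prod *
                  (List.ofFn fun l => B (snf z y l)).prod) := by
            apply Finset.sum_congr rfl
            intro i _
            exact insert_reindex hAA hBB i
              (fun y z => (ξ (Fin.last n) y *
                  (∑ h ∈ surjs n (m + 1), ∏ j, ξ j.castSucc (z (h j))))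
                / (m + 1 + 1).factorial * (σ y * ∏ l, σ (z l)))
          _ = ∑ x : Fin (m + 1) → X, ∑ y,
              ((((∑ g ∈ surjs n (m + 1), ∏ j, ξ j.castSucc (x (g j))) / (m + 1).factorial)
                * ∏ i, σ (x i)) * (ξ (Fin.last n) y * σ y)) •
                ((List.ofFn fun i => A (snf x y i)).prod *
                  (List.ofFn fun i => B (snf x y i)).prod) := by
            rw [Finset.sum_const, Finset.card_univ, Fintype.card_fin,
              ← Nat.cast_smul_eq_nsmul ℝ, Finset.smul_sum]
            apply Finset.sum_congr rfl
            intro z _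
            rw [Finset.smul_sum]
            apply Finset.sum_congr rfl
            intro y _
            rw [smul_smul]
            congr 1
            have hfac : ((m + 1 + 1).factorial : ℝ) = (m + 1 + 1) * (m + 1).factorial := by
              rw [Nat.factorial_succ]; push_cast; ring
            have h1 : ((m + 1).factorial : ℝ) ≠ 0 := by
              exact_mod_cast Nat.factorial_ne_zero (m + 1)
            have h2 : ((m : ℝ) + 1 + 1) ≠ 0 := by positivity
            rw [hfac]
            push_cast
            field_simp
    have hLHS : (List.ofFn (fun j : Fin (n + 1) => ∑ x, (ξ j x * σ x) • (A x * B x))).prod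
        = (List.ofFn (fun j : Fin n => ∑ x, (ξ j.castSucc x * σ x) • (A x * B x))).prod
          * (∑ x, (ξ (Fin.last n) x * σ x) • (A x * B x)) := by
      rw [List.ofFn_succ' (fun j : Fin (n + 1) => ∑ x, (ξ j x * σ x) • (A x * B x)),
        List.prod_concat]
    calc (List.ofFn (fun j : Fin (n + 1) => ∑ x, (ξ j x * σ x) • (A x * B x))).prod
        = (∑ m ∈ Finset.range n, ∑ x : Fin (m + 1) → X,
            (((∑ g ∈ surjs n (m + 1), ∏ j, ξ j.castSucc (x (g j))) / (m + 1).factorial)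
              * ∏ i, σ (x i)) •
              ((List.ofFn fun i => A (x i)).prod * (List.ofFn fun i => B (x i)).prod))
            * (∑ y, (ξ (Fin.last n) y * σ y) • (A y * B y)) := by
          rw [hLHS, IH (fun j => ξ j.castSucc)]
      _ = ∑ m ∈ Finset.range n,
            ((∑ x : Fin (m + 1) → X,
              (((∑ g ∈ surjs n (m + 1), ∏ j, ξ j.castSucc (x (g j))) / (m + 1).factorial)
                * ∏ i, σ (x i)) •
                ((List.ofFn fun i => A (x i)).prod * (List.ofFn fun i => B (x i)).prod))
              * (∑ y, (ξ (Fin.last n) y * σ y) • (A y * B y))) := Finset.sum_mul _ _ _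
      _ = ∑ m ∈ Finset.range n,
            ((∑ x : Fin (m + 1) → X, ∑ y,
              ((((∑ g ∈ surjs n (m + 1), ∏ j, ξ j.castSucc (x (g j))) / (m + 1).factorial)
                * ∏ i, σ (x i)) * (ξ (Fin.last n) y * σ y)) •
                ((List.ofFn fun i => A (snf x y i)).prod *
                  (List.ofFn fun i => B (snf x y i)).prod))
            + ∑ x : Fin (m + 1) → X,
              ((((∑ g ∈ surjs n (m + 1), ∏ j, ξ j.castSucc (x (g j))) / (m + 1).factorial)
                * ∏ i, σ (x i)) * ∑ i, ξ (Fin.last n) (x i)) •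
                ((List.ofFn fun i => A (x i)).prod * (List.ofFn fun i => B (x i)).prod)) :=
          Finset.sum_congr rfl (fun m _ => sumW_mul_rho hσ hAA hBB hBA _ _)
      _ = (∑ m ∈ Finset.range n, ∑ x : Fin (m + 1) → X, ∑ y,
            ((((∑ g ∈ surjs n (m + 1), ∏ j, ξ j.castSucc (x (g j))) / (m + 1).factorial)
              * ∏ i, σ (x i)) * (ξ (Fin.last n) y * σ y)) •
              ((List.ofFn fun i => A (snf x y i)).prod *
                (List.ofFn fun i => B (snf x y i)).prod))
          + ∑ m ∈ Finset.range n, ∑ x : Fin (m + 1) → X,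
            ((((∑ g ∈ surjs n (m + 1), ∏ j, ξ j.castSucc (x (g j))) / (m + 1).factorial)
              * ∏ i, σ (x i)) * ∑ i, ξ (Fin.last n) (x i)) •
              ((List.ofFn fun i => A (x i)).prod * (List.ofFn fun i => B (x i)).prod) :=
          Finset.sum_add_distrib
      _ = (∑ m ∈ Finset.range (n + 1), ∑ x : Fin (m + 1) → X,
            ((∑ i, ξ (Fin.last n) (x i) *
                (∑ h ∈ surjs n m, ∏ j, ξ j.castSucc (x (i.succAbove (h j)))))
              / (m + 1).factorial * ∏ i, σ (x i)) •
              ((List.ofFn fun i => A (x i)).prod * (List.ofFn fun i => B (x i)).prod))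
          + ∑ m ∈ Finset.range (n + 1), ∑ x : Fin (m + 1) → X,
            (((∑ i, ξ (Fin.last n) (x i)) *
                (∑ g ∈ surjs n (m + 1), ∏ j, ξ j.castSucc (x (g j)))
              / (m + 1).factorial * ∏ i, σ (x i))) •
              ((List.ofFn fun i => A (x i)).prod * (List.ofFn fun i => B (x i)).prod) := by
          rw [eqB, eqA]
      _ = ∑ m ∈ Finset.range (n + 1), ∑ x : Fin (m + 1) → X,
            (((∑ g' ∈ surjs (n + 1) (m + 1), ∏ j, ξ j (x (g' j))) / (m + 1).factorial)
              * ∏ i, σ (x i)) •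
              ((List.ofFn fun i => A (x i)).prod * (List.ofFn fun i => B (x i)).prod) := by
          rw [add_comm, ← Finset.sum_add_distrib]
          apply Finset.sum_congr rfl
          intro m _
          rw [← Finset.sum_add_distrib]
          apply Finset.sum_congr rfl
          intro x _
          have hd : (∑ g' ∈ surjs (n + 1) (m + 1), ∏ j, ξ j (x (g' j)))
              = (∑ i, ξ (Fin.last n) (x i)) *
                  (∑ g ∈ surjs n (m + 1), ∏ j, ξ j.castSucc (x (g j)))
                + ∑ i, ξ (Fin.last n) (x i) *
                    (∑ h ∈ surjs n m, ∏ j, ξ j.castSucc (x (i.succAbove (h j)))) :=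
            surj_decomp n m (fun j i => ξ j (x i))
          rw [hd, add_div, add_mul, add_smul]

end Aux8


/-- Katriel's formula for CCR operators, algebraic version:
given operators `a⁺(x), a⁻(x)` on a vector space `V` satisfying the pointwise CCR
`[a⁺(x),a⁺(y)] = [a⁻(x),a⁻(y)] = 0`, `[a⁻(x),a⁺(y)] = (δ_{xy}/σ({x}))·Id`, and the
particle densities `ρ(ξ) = Σ_x ξ(x)σ({x})·a⁺(x)a⁻(x)`, the product `ρ(ξ₁)⋯ρ(ξ_n)`
equals `Σ_{k=1}^{n} Σ_{x₁,…,x_k} (S(n,k)(ξ₁⊙⋯⊙ξ_n))(x₁,…,x_k) ·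
a⁺(x₁)⋯a⁺(x_k)a⁻(x_k)⋯a⁻(x₁) · σ({x₁})⋯σ({x_k})`. -/
theorem katriel_formula
    {X : Type*} [Fintype X] [DecidableEq X] {V : Type*} [AddCommGroup V] [Module ℝ V]
    (σ : X → ℝ) (hσ : ∀ x, σ x ≠ 0)
    (A B : X → Module.End ℝ V)
    (hAA : ∀ x y, A x * A y = A y * A x)
    (hBB : ∀ x y, B x * B y = B y * B x)
    (hBA : ∀ x y, B x * A y - A y * B x
      = if x = y then (σ x)⁻¹ • (1 : Module.End ℝ V) else 0)
    {n : ℕ} (hn : 1 ≤ n) (ξ : Fin n → X → ℝ) :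
    (List.ofFn (fun j => ∑ x, (ξ j x * σ x) • (A x * B x))).prod
      = ∑ k ∈ Finset.Icc 1 n, ∑ x : Fin k → X,
          (Sop n k (symmFun n (fun v => ∏ j, ξ j (v j))) x * ∏ i, σ (x i)) •
            ((List.ofFn (fun i => A (x i))).prod *
              (List.ofFn (fun i => B (x i))).reverse.prod) := by
  have revB : ∀ {k : ℕ} (x : Fin k → X),
      (List.ofFn (fun i => B (x i))).reverse.prod = (List.ofFn (fun i => B (x i))).prod := by
    intro k x
    have hmap : (List.ofFn fun i => B (x i)) = (List.ofFn x).map B := by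
      rw [List.map_ofFn]; rfl
    rw [hmap, ← List.map_reverse]
    exact prod_map_perm_comm (fun a b => hBB a b) (List.reverse_perm (List.ofFn x))
  rw [katriel_aux σ hσ A B hAA hBB hBA n hn ξ, sum_Icc_one]
  apply Finset.sum_congr rfl
  intro m _
  apply Finset.sum_congr rfl
  intro x _
  congr 1
  · congr 1
    rw [Sop_symmFun]
    rfl
  · congr 1
    exact (revB x).symm
end

section
/- (Poisson functional evaluates falling factorials to moments.) Let X be a finite set and ω a finitely supported signed measure on X with total mass ω(X). Define the Poisson functional on a polynomial p of the measure variable by E_ω(p) = e^{−ω(X)} Σ_{m=0}^{∞} (1/m!) Σ_{x₁,…,x_m ∈ X} p(δ_{x₁}+⋯+δ_{x_m}) ω({x₁})⋯ω({x_m}). Then for every k ≥ 1 and symmetric g : X^k → ℝ, E_ω applied to the polynomial η ↦ ⟨(η)_k, g⟩ equals ⟨ω^{⊗k}, g⟩. Consequently, for symmetric f : X^n → ℝ, E_ω applied to η ↦ ⟨η^{⊗n}, f⟩ equals Σ_{k=1}^{n} ⟨ω^{⊗k}, S(n,k)f⟩. -/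
open Finset

/-- The Poisson functional with (possibly signed) intensity `ω`:
`E_ω(p) = e^{−ω(X)} Σ_{m=0}^{∞} (1/m!) Σ_{x₁,…,x_m ∈ X} p(δ_{x₁}+⋯+δ_{x_m}) ω({x₁})⋯ω({x_m})`. -/
noncomputable def poissonE {X : Type*} [Fintype X] [DecidableEq X]
    (ω : X → ℝ) (p : (X → ℝ) → ℝ) : ℝ :=
  Real.exp (-∑ x, ω x) *
    ∑' m : ℕ, (1 / (m.factorial : ℝ)) * ∑ x : Fin m → X, p (msMeas x) * ∏ i, ω (x i)

set_option maxHeartbeats 1000000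
set_option linter.unusedSectionVars false

section L1

variable {X : Type*} [Fintype X] [DecidableEq X]

/-- injective placements of `y` inside `x`. -/
noncomputable def fitSet {m k : ℕ} (x : Fin m → X) (y : Fin k → X) : Finset (Fin k → Fin m) :=
  univ.filter (fun α => Function.Injective α ∧ x ∘ α = y)

lemma snoc_injective {m k : ℕ} {α' : Fin k → Fin m} {a : Fin m}
    (h1 : Function.Injective α') (h2 : a ∉ Set.range α') :
    Function.Injective (Fin.snoc α' a) := by
  intro b c h
  induction b using Fin.lastCases with
  | last =>
    induction c using Fin.lastCases with
    | last => rfl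
    | cast c =>
      rw [Fin.snoc_last, Fin.snoc_castSucc] at h
      exact absurd ⟨c, h.symm⟩ h2
  | cast b =>
    induction c using Fin.lastCases with
    | last =>
      rw [Fin.snoc_castSucc, Fin.snoc_last] at h
      exact absurd ⟨b, h⟩ h2
    | cast c =>
      rw [Fin.snoc_castSucc, Fin.snoc_castSucc] at h
      exact congrArg Fin.castSucc (h1 h)

lemma ff_msMeas_count {m : ℕ} (x : Fin m → X) : ∀ (k : ℕ) (y : Fin k → X),
    ff (msMeas x) k y = ((fitSet x y).card : ℝ) := by
  intro k
  induction k with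
  | zero =>
    intro y
    have h : fitSet x y = univ := by
      ext α
      simp only [fitSet, mem_filter, mem_univ, true_and, iff_true]
      exact ⟨fun {a} => a.elim0, funext fun i => i.elim0⟩
    rw [h]
    simp [ff]
  | succ k ih =>
    intro y
    classical
    set L := y (Fin.last k) with hL
    set A' : Finset (Fin k → Fin m) := fitSet x (fun i => y i.castSucc) with hA'
    -- card identity
    have hcard : (fitSet x y).card
        = ∑ α' ∈ A', (univ.filter (fun j => x j = L ∧ j ∉ Set.range α')).card := by
      rw [← Finset.card_sigma]
      apply Finset.card_nbij' (i := fun α => (⟨fun i => α i.castSucc, α (Fin.last k)⟩ :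
          Σ _ : Fin k → Fin m, Fin m))
        (j := fun p => Fin.snoc p.1 p.2)
      · intro α hα
        simp only [Finset.mem_coe, fitSet, mem_filter, mem_univ, true_and] at hα
        obtain ⟨hinj, hxy⟩ := hα
        refine Finset.mem_coe.2 (Finset.mem_sigma.2 ⟨?_, ?_⟩)
        · simp only [hA', fitSet, mem_filter, mem_univ, true_and]
          constructor
          · intro b c h
            exact Fin.castSucc_injective _ (hinj h)
          · exact funext fun i => congrFun hxy i.castSucc
        · simp only [mem_filter, mem_univ, true_and]
          refine ⟨congrFun hxy (Fin.last k), ?_⟩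
          rintro ⟨i, hi⟩
          exact (Fin.castSucc_lt_last i).ne (hinj hi)
      · rintro ⟨α', a⟩ hp
        rw [Finset.mem_coe, Finset.mem_sigma] at hp
        obtain ⟨h1, h2⟩ := hp
        simp only [hA', fitSet, mem_filter, mem_univ, true_and] at h1
        simp only [mem_filter, mem_univ, true_and] at h2
        simp only [Finset.mem_coe, fitSet, mem_filter, mem_univ, true_and]
        refine ⟨snoc_injective h1.1 h2.2, funext fun i => ?_⟩
        induction i using Fin.lastCases with
        | last => simpa [Fin.snoc_last] using h2.1
        | cast i => simpa [Fin.snoc_castSucc] using congrFun h1.2 i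
      · intro α _
        exact Fin.snoc_init_self α
      · rintro ⟨α', a⟩ _
        refine Sigma.ext (funext fun i => ?_) (heq_of_eq ?_) <;> simp
    -- per-element count
    have hcnt : ∀ α' ∈ A', ((univ.filter (fun j => x j = L ∧ j ∉ Set.range α')).card : ℝ)
        = msMeas x L - ∑ i : Fin k, (if y i.castSucc = L then (1:ℝ) else 0) := by
      intro α' hα'
      simp only [hA', fitSet, mem_filter, mem_univ, true_and] at hα'
      obtain ⟨hinj, hxy⟩ := hα'
      have hsplit : (univ.filter (fun j => x j = L ∧ j ∈ Set.range α')).card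
          + (univ.filter (fun j => x j = L ∧ j ∉ Set.range α')).card
          = (univ.filter (fun j => x j = L)).card := by
        have := Finset.card_filter_add_card_filter_not
          (s := univ.filter (fun j => x j = L)) (p := fun j => j ∈ Set.range α')
        simpa [Finset.filter_filter] using this
      have hbij : (univ.filter (fun i : Fin k => y i.castSucc = L)).card
          = (univ.filter (fun j => x j = L ∧ j ∈ Set.range α')).card := by
        apply Finset.card_bij (i := fun i _ => α' i)
        · intro i hi
          simp only [mem_filter, mem_univ, true_and] at hi ⊢
          exact ⟨(congrFun hxy i).trans hi, ⟨i, rfl⟩⟩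
        · intro a _ b _ h
          exact hinj h
        · intro j hj
          simp only [mem_filter, mem_univ, true_and] at hj
          obtain ⟨hxj, i, rfl⟩ := hj
          refine ⟨i, ?_, rfl⟩
          simp only [mem_filter, mem_univ, true_and]
          exact (congrFun hxy i).symm.trans hxj
      have h1 : ∑ i : Fin k, (if y i.castSucc = L then (1:ℝ) else 0)
          = ((univ.filter (fun i : Fin k => y i.castSucc = L)).card : ℝ) := by
        rw [Finset.sum_boole]
      rw [h1, hbij, msMeas]
      have := congrArg (Nat.cast (R := ℝ)) hsplit
      push_cast at this
      linarith
    rw [hcard]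
    push_cast
    rw [Finset.sum_congr rfl hcnt, Finset.sum_const, nsmul_eq_mul]
    simp only [ff]
    rw [ih (fun i => y i.castSucc), hA', hL]

end L1

section L2

variable {X : Type*} [Fintype X] [DecidableEq X]

lemma pairing_ff {m k : ℕ} (x : Fin m → X) (g : (Fin k → X) → ℝ) :
    pairing k (ff (msMeas x) k) g
      = ∑ α ∈ univ.filter (fun α : Fin k → Fin m => Function.Injective α), g (x ∘ α) := by
  classical
  rw [← Finset.sum_fiberwise_of_maps_to (g := fun α : Fin k → Fin m => x ∘ α)
      (t := (univ : Finset (Fin k → X))) (fun α _ => Finset.mem_univ _) (fun α => g (x ∘ α))]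
  unfold pairing
  refine Finset.sum_congr rfl fun y _ => ?_
  rw [ff_msMeas_count]
  have hset : (univ.filter (fun α : Fin k → Fin m => Function.Injective α)).filter
      (fun α => x ∘ α = y) = fitSet x y := by
    rw [Finset.filter_filter]
    rfl
  rw [hset]
  have h : ∀ α ∈ fitSet x y, g (x ∘ α) = g y := fun α hα => by
    simp only [fitSet, mem_filter] at hα
    rw [hα.2.2]
  rw [Finset.sum_congr rfl h, Finset.sum_const, nsmul_eq_mul, mul_comm]

/-- Fill in a function on `Fin m` from values on an injection and on its complement. -/
noncomputable def place {m k : ℕ} (α : Fin k → Fin m)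
    (p : (Fin k → X) × ({j : Fin m // j ∉ Set.range α} → X)) : Fin m → X :=
  fun j => if h : ∃ i, α i = j then p.1 h.choose else p.2 ⟨j, h⟩

lemma place_apply_range {m k : ℕ} {α : Fin k → Fin m} (hα : Function.Injective α)
    (p : (Fin k → X) × ({j : Fin m // j ∉ Set.range α} → X)) (i : Fin k) :
    place α p (α i) = p.1 i := by
  unfold place
  have h : ∃ i', α i' = α i := ⟨i, rfl⟩
  rw [dif_pos h]
  exact congrArg p.1 (hα h.choose_spec)

lemma place_apply_not_range {m k : ℕ} {α : Fin k → Fin m}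
    (p : (Fin k → X) × ({j : Fin m // j ∉ Set.range α} → X)) (j : Fin m)
    (hj : j ∉ Set.range α) :
    place α p j = p.2 ⟨j, hj⟩ := by
  unfold place
  exact dif_neg hj

noncomputable def placeEquiv {m k : ℕ} (α : Fin k → Fin m) (hα : Function.Injective α) :
    ((Fin k → X) × ({j : Fin m // j ∉ Set.range α} → X)) ≃ (Fin m → X) where
  toFun := place α
  invFun := fun x => (x ∘ α, fun c => x c.1)
  left_inv := fun p => by
    refine Prod.ext (funext fun i => ?_) (funext fun c => ?_)
    · exact place_apply_range hα p i
    · exact place_apply_not_range p c.1 c.2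
  right_inv := fun x => by
    funext j
    by_cases h : j ∈ Set.range α
    · obtain ⟨i, rfl⟩ := h
      exact place_apply_range hα _ i
    · exact place_apply_not_range _ j h

lemma sum_x_fixed_inj {m k : ℕ} {α : Fin k → Fin m} (hα : Function.Injective α)
    (ω : X → ℝ) (g : (Fin k → X) → ℝ) :
    ∑ x : Fin m → X, g (x ∘ α) * ∏ i, ω (x i)
      = (∑ y : Fin k → X, g y * ∏ i, ω (y i)) * (∑ a, ω a) ^ (m - k) := by
  classical
  rw [← Equiv.sum_comp (placeEquiv α hα) (fun x => g (x ∘ α) * ∏ i, ω (x i))]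
  have key : ∀ p : (Fin k → X) × ({j : Fin m // j ∉ Set.range α} → X),
      g (placeEquiv α hα p ∘ α) * ∏ i, ω (placeEquiv α hα p i)
        = (g p.1 * ∏ i, ω (p.1 i)) * ∏ c : {j : Fin m // j ∉ Set.range α}, ω (p.2 c) := by
    intro p
    have h1 : placeEquiv α hα p ∘ α = p.1 := funext fun i => place_apply_range hα p i
    have h2 : ∏ j, ω (placeEquiv α hα p j)
        = (∏ i, ω (p.1 i)) * ∏ c : {j : Fin m // j ∉ Set.range α}, ω (p.2 c) := by
      rw [← Finset.prod_mul_prod_compl (univ.image α) (fun j => ω (placeEquiv (X := X) α hα p j))]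
      congr 1
      · rw [Finset.prod_image (fun a _ b _ h => hα h)]
        exact Finset.prod_congr rfl fun i _ => congrArg ω (place_apply_range hα p i)
      · rw [Finset.prod_subtype ((univ.image α)ᶜ)
          (p := fun j => j ∉ Set.range α) (fun j => by simp [Set.mem_range])]
        exact Finset.prod_congr rfl fun c _ => congrArg ω (place_apply_not_range p c.1 c.2)
    rw [h1, h2]
    ring
  rw [Finset.sum_congr rfl fun p _ => key p, Fintype.sum_prod_type]
  have hcardC : Fintype.card {j : Fin m // j ∉ Set.range α} = m - k := by
    have h1 : Fintype.card {j : Fin m // j ∈ Set.range α} = k := by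
      rw [Fintype.card_congr (Equiv.ofInjective α hα).symm, Fintype.card_fin]
    rw [Fintype.card_subtype_compl, Fintype.card_fin, h1]
  have hz : ∑ z : {j : Fin m // j ∉ Set.range α} → X,
      ∏ c : {j : Fin m // j ∉ Set.range α}, ω (z c) = (∑ a, ω a) ^ (m - k) := by
    rw [← Fintype.piFinset_univ, Finset.sum_prod_piFinset, Finset.prod_const,
      Finset.card_univ, hcardC]
  have step : ∀ y : Fin k → X, ∑ z : {j : Fin m // j ∉ Set.range α} → X,
      (g y * ∏ i, ω (y i)) * ∏ c, ω (z c)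
        = (g y * ∏ i, ω (y i)) * (∑ a, ω a) ^ (m - k) := fun y => by
    rw [← Finset.mul_sum, hz]
  rw [Finset.sum_congr rfl fun y _ => step y, ← Finset.sum_mul]

lemma card_inj_funs (k m : ℕ) :
    (univ.filter (fun α : Fin k → Fin m => Function.Injective α)).card
      = m.descFactorial k := by
  classical
  rw [← Fintype.card_subtype]
  rw [Fintype.card_congr (Equiv.subtypeInjectiveEquivEmbedding (Fin k) (Fin m))]
  rw [Fintype.card_embedding_eq, Fintype.card_fin, Fintype.card_fin]

end L2

section L3

noncomputable def expTerm (s : ℝ) (k : ℕ) (m : ℕ) : ℝ :=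
  if k ≤ m then s ^ (m - k) / (m - k).factorial else 0

lemma expTerm_support (s : ℝ) (k : ℕ) :
    ∀ m ∉ Set.range (fun j : ℕ => k + j), expTerm s k m = 0 := by
  intro m hm
  rw [expTerm, if_neg]
  intro h
  exact hm ⟨m - k, show k + (m - k) = m by omega⟩

lemma addk_inj (k : ℕ) : Function.Injective (fun j : ℕ => k + j) := fun a b h => by
  simpa using h

lemma expTerm_comp (s : ℝ) (k : ℕ) :
    (expTerm s k ∘ fun j : ℕ => k + j) = fun j : ℕ => s ^ j / j.factorial := by
  funext j
  simp [expTerm, Nat.le_add_right]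

lemma expTerm_summable (s : ℝ) (k : ℕ) : Summable (expTerm s k) := by
  refine ((addk_inj k).summable_iff (expTerm_support s k)).mp ?_
  rw [expTerm_comp]
  exact Real.summable_pow_div_factorial s

lemma expTerm_tsum (s : ℝ) (k : ℕ) : ∑' m, expTerm s k m = Real.exp s := by
  rw [← Function.Injective.tsum_eq (addk_inj k)
    (Function.support_subset_iff'.mpr (expTerm_support s k))]
  have : ∀ j : ℕ, expTerm s k (k + j) = s ^ j / j.factorial := fun j => congrFun (expTerm_comp s k) j
  rw [tsum_congr this, Real.exp_eq_exp_ℝ, NormedSpace.exp_eq_tsum_div]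

section PoissonKey

variable {X : Type*} [Fintype X] [DecidableEq X]

lemma term_eq (ω : X → ℝ) (k : ℕ) (g : (Fin k → X) → ℝ) (m : ℕ) :
    (1 / (m.factorial : ℝ)) * ∑ x : Fin m → X, pairing k (ff (msMeas x) k) g * ∏ i, ω (x i)
      = pairing k (prodMeas ω k) g * expTerm (∑ a, ω a) k m := by
  classical
  have hP : (∑ y : Fin k → X, g y * ∏ i, ω (y i)) = pairing k (prodMeas ω k) g :=
    Finset.sum_congr rfl fun y _ => mul_comm _ _
  have h1 : ∑ x : Fin m → X, pairing k (ff (msMeas x) k) g * ∏ i, ω (x i)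
      = (m.descFactorial k : ℝ) * (pairing k (prodMeas ω k) g * (∑ a, ω a) ^ (m - k)) := by
    calc ∑ x : Fin m → X, pairing k (ff (msMeas x) k) g * ∏ i, ω (x i)
        = ∑ x : Fin m → X, ∑ α ∈ univ.filter (fun α : Fin k → Fin m => Function.Injective α),
            g (x ∘ α) * ∏ i, ω (x i) := by
          refine Finset.sum_congr rfl fun x _ => ?_
          rw [pairing_ff, Finset.sum_mul]
      _ = ∑ α ∈ univ.filter (fun α : Fin k → Fin m => Function.Injective α),
            ∑ x : Fin m → X, g (x ∘ α) * ∏ i, ω (x i) := Finset.sum_comm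
      _ = ∑ α ∈ univ.filter (fun α : Fin k → Fin m => Function.Injective α),
            pairing k (prodMeas ω k) g * (∑ a, ω a) ^ (m - k) := by
          refine Finset.sum_congr rfl fun α hα => ?_
          rw [sum_x_fixed_inj (Finset.mem_filter.mp hα).2 ω g, hP]
      _ = _ := by rw [Finset.sum_const, card_inj_funs, nsmul_eq_mul]
  rw [h1]
  by_cases h : k ≤ m
  · rw [expTerm, if_pos h]
    have hfac : ((m - k).factorial : ℝ) * (m.descFactorial k : ℝ) = (m.factorial : ℝ) := by
      exact_mod_cast congrArg (Nat.cast (R := ℝ)) (Nat.factorial_mul_descFactorial h)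
    have h2 : (m.factorial : ℝ) ≠ 0 := Nat.cast_ne_zero.mpr m.factorial_ne_zero
    have h3 : ((m - k).factorial : ℝ) ≠ 0 := Nat.cast_ne_zero.mpr (m - k).factorial_ne_zero
    have hdesc : (m.descFactorial k : ℝ) = (m.factorial : ℝ) / ((m - k).factorial : ℝ) :=
      (eq_div_iff h3).mpr (by linarith [hfac])
    rw [hdesc]
    field_simp
  · rw [expTerm, if_neg h]
    have : m.descFactorial k = 0 := Nat.descFactorial_eq_zero_iff_lt.mpr (Nat.lt_of_not_le h)
    simp [this]

lemma poissonE_pairing_ff (ω : X → ℝ) (k : ℕ) (g : (Fin k → X) → ℝ) :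
    poissonE ω (fun η => pairing k (ff η k) g) = pairing k (prodMeas ω k) g := by
  unfold poissonE
  rw [tsum_congr (term_eq ω k g), tsum_mul_left, expTerm_tsum, mul_comm (pairing k (prodMeas ω k) g),
    ← mul_assoc, ← Real.exp_add, neg_add_cancel, Real.exp_zero, one_mul]

end PoissonKey
end L3

section L4

variable {n m j : ℕ}

/-- Monotone enumeration of the image of `β`. -/
noncomputable def aEmb (β : Fin n → Fin m) (h : (univ.image β).card = j) : Fin j → Fin m :=
  fun i => (univ.image β).orderEmbOfFin h i

/-- Index of `β i'` in the monotone enumeration of the image. -/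
noncomputable def gIdx (β : Fin n → Fin m) (h : (univ.image β).card = j) : Fin n → Fin j :=
  fun i' => ((univ.image β).orderIsoOfFin h).symm ⟨β i', Finset.mem_image_of_mem β (mem_univ i')⟩

lemma aEmb_inj (β : Fin n → Fin m) (h : (univ.image β).card = j) :
    Function.Injective (aEmb β h) :=
  ((univ.image β).orderEmbOfFin h).injective

lemma aEmb_iso (β : Fin n → Fin m) (h : (univ.image β).card = j) (i : Fin j) :
    aEmb β h i = ((univ.image β).orderIsoOfFin h i : Fin m) :=
  (Finset.coe_orderIsoOfFin_apply _ h i).symm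

lemma aEmb_gIdx (β : Fin n → Fin m) (h : (univ.image β).card = j) (i' : Fin n) :
    aEmb β h (gIdx β h i') = β i' := by
  rw [aEmb_iso, gIdx, OrderIso.apply_symm_apply]

lemma gIdx_surj (β : Fin n → Fin m) (h : (univ.image β).card = j) :
    Function.Surjective (gIdx β h) := by
  intro i
  have hmem : (((univ.image β).orderIsoOfFin h i : Fin m)) ∈ univ.image β :=
    ((univ.image β).orderIsoOfFin h i).2
  obtain ⟨i', -, hi'⟩ := Finset.mem_image.mp hmem
  refine ⟨i', ?_⟩
  rw [gIdx]
  rw [show (⟨β i', Finset.mem_image_of_mem β (mem_univ i')⟩ :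
      {a // a ∈ univ.image β}) = ((univ.image β).orderIsoOfFin h i) from Subtype.ext hi']
  exact OrderIso.symm_apply_apply _ _

lemma image_comp_card {α : Fin j → Fin m} {g : Fin n → Fin j}
    (hα : Function.Injective α) (hg : Function.Surjective g) :
    (univ.image (α ∘ g)).card = j := by
  rw [← Finset.image_image, Finset.image_univ_of_surjective hg,
    Finset.card_image_of_injective _ hα, Finset.card_univ, Fintype.card_fin]

lemma mem_image_comp {α : Fin j → Fin m} {g : Fin n → Fin j}
    (hg : Function.Surjective g) (i : Fin j) : α i ∈ univ.image (α ∘ g) := by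
  obtain ⟨i', hi'⟩ := hg i
  exact Finset.mem_image.mpr ⟨i', mem_univ i', by simp [Function.comp, hi']⟩

/-- The permutation comparing an injection `α` with the canonical enumeration of the image. -/
noncomputable def sigmaPermFun (s : Finset (Fin m)) (h : s.card = j) (α : Fin j → Fin m)
    (hmem : ∀ i, α i ∈ s) : Fin j → Fin j :=
  fun i => (s.orderIsoOfFin h).symm ⟨α i, hmem i⟩

lemma sigmaPermFun_bij (s : Finset (Fin m)) (h : s.card = j) (α : Fin j → Fin m)
    (hmem : ∀ i, α i ∈ s) (hα : Function.Injective α) :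
    Function.Bijective (sigmaPermFun s h α hmem) := by
  rw [← Finite.injective_iff_bijective]
  intro a b hab
  have := (s.orderIsoOfFin h).symm.injective hab
  exact hα (congrArg Subtype.val this)

lemma aEmb_sigmaPermFun (β : Fin n → Fin m) (hβ : (univ.image β).card = j)
    (α : Fin j → Fin m) (hmem : ∀ i, α i ∈ univ.image β) (i0 : Fin j) :
    aEmb β hβ (sigmaPermFun (univ.image β) hβ α hmem i0) = α i0 := by
  rw [aEmb_iso, sigmaPermFun, OrderIso.apply_symm_apply]

lemma sigmaPermFun_eq (s t : Finset (Fin m)) (hst : s = t) (hs : s.card = j) (ht : t.card = j)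
    (α : Fin j → Fin m) (hmem : ∀ i, α i ∈ s) (i0 : Fin j) (z : Fin j)
    (hz : α i0 = (t.orderIsoOfFin ht z : Fin m)) :
    sigmaPermFun s hs α hmem i0 = z := by
  subst hst
  rw [sigmaPermFun]
  rw [show (⟨α i0, hmem i0⟩ : {a // a ∈ s}) = s.orderIsoOfFin hs z from Subtype.ext hz]
  exact OrderIso.symm_apply_apply _ _


lemma sum_inj_surj (F : (Fin n → Fin m) → ℝ) (j : ℕ) :
    ∑ α ∈ univ.filter (fun α : Fin j → Fin m => Function.Injective α),
      ∑ g ∈ surjs n j, F (α ∘ g)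
      = (j.factorial : ℝ) *
        ∑ β ∈ univ.filter (fun β : Fin n → Fin m => (univ.image β).card = j), F β := by
  classical
  rw [← Finset.sum_product' (f := fun α g => F (α ∘ g))]
  have main : ∑ p ∈ (univ.filter (fun α : Fin j → Fin m => Function.Injective α)) ×ˢ surjs n j,
      F (p.1 ∘ p.2)
      = ∑ q ∈ (univ.filter (fun β : Fin n → Fin m => (univ.image β).card = j)) ×ˢ
          (univ : Finset (Equiv.Perm (Fin j))), F q.1 := by
    refine Finset.sum_bij'
      (i := fun p hp => (p.1 ∘ p.2, Equiv.ofBijective _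
        (sigmaPermFun_bij (univ.image (p.1 ∘ p.2))
          (image_comp_card (Finset.mem_filter.mp (Finset.mem_product.mp hp).1).2
            (Finset.mem_filter.mp (Finset.mem_product.mp hp).2).2)
          p.1 (mem_image_comp (Finset.mem_filter.mp (Finset.mem_product.mp hp).2).2)
          (Finset.mem_filter.mp (Finset.mem_product.mp hp).1).2)))
      (j := fun q hq => (aEmb q.1 (Finset.mem_filter.mp (Finset.mem_product.mp hq).1).2 ∘ q.2,
        ⇑q.2.symm ∘ gIdx q.1 (Finset.mem_filter.mp (Finset.mem_product.mp hq).1).2))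
      ?_ ?_ ?_ ?_ ?_
    · intro p hp
      obtain ⟨h1, h2⟩ := Finset.mem_product.mp hp
      refine Finset.mem_product.mpr ⟨?_, mem_univ _⟩
      exact Finset.mem_filter.mpr ⟨mem_univ _,
        image_comp_card (Finset.mem_filter.mp h1).2 (Finset.mem_filter.mp h2).2⟩
    · intro q hq
      obtain ⟨h1, h2⟩ := Finset.mem_product.mp hq
      have hβ := (Finset.mem_filter.mp h1).2
      refine Finset.mem_product.mpr ⟨Finset.mem_filter.mpr ⟨mem_univ _, ?_⟩,
        Finset.mem_filter.mpr ⟨mem_univ _, ?_⟩⟩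
      · exact (aEmb_inj q.1 hβ).comp q.2.injective
      · exact q.2.symm.surjective.comp (gIdx_surj q.1 hβ)
    · -- left_inv : j (i p) = p
      intro p hp
      obtain ⟨h1, h2⟩ := Finset.mem_product.mp hp
      have hα := (Finset.mem_filter.mp h1).2
      have hg := (Finset.mem_filter.mp h2).2
      refine Prod.ext (funext fun i0 => ?_) (funext fun i' => ?_)
      · simp only [Function.comp_apply, Equiv.ofBijective_apply]
        exact aEmb_sigmaPermFun (p.1 ∘ p.2) _ p.1 _ i0
      · simp only [Function.comp_apply]
        rw [Equiv.symm_apply_eq]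
        rfl
    · -- right_inv : i (j q) = q
      intro q hq
      obtain ⟨h1, h2⟩ := Finset.mem_product.mp hq
      have hβ := (Finset.mem_filter.mp h1).2
      have hfun : (aEmb q.1 hβ ∘ ⇑q.2) ∘ (⇑q.2.symm ∘ gIdx q.1 hβ) = q.1 := by
        funext i'
        show aEmb q.1 hβ (q.2 (q.2.symm (gIdx q.1 hβ i'))) = q.1 i'
        rw [Equiv.apply_symm_apply, aEmb_gIdx]
      refine Prod.ext hfun ?_
      refine Equiv.ext fun i0 => ?_
      exact sigmaPermFun_eq (univ.image ((aEmb q.1 hβ ∘ ⇑q.2) ∘ (⇑q.2.symm ∘ gIdx q.1 hβ)))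
        (univ.image q.1) (by rw [hfun]) (by rw [hfun]; exact hβ) hβ (aEmb q.1 hβ ∘ ⇑q.2) _ i0 (q.2 i0)
        (aEmb_iso q.1 hβ (q.2 i0))
    · intro p hp
      rfl
  rw [main, Finset.sum_product (f := fun q => F q.1)]
  rw [Finset.sum_congr rfl (fun β _ => Finset.sum_const (F β)), Finset.sum_congr rfl
    (fun β _ => by rw [Finset.card_univ, Fintype.card_perm, Fintype.card_fin])]
  rw [← Finset.smul_sum, nsmul_eq_mul]

end L4

lemma sum_maps_eq (hn : 1 ≤ n) (F : (Fin n → Fin m) → ℝ) :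
    ∑ β : Fin n → Fin m, F β
      = ∑ j ∈ Finset.Icc 1 n,
          (∑ α ∈ univ.filter (fun α : Fin j → Fin m => Function.Injective α),
            ∑ g ∈ surjs n j, F (α ∘ g)) / j.factorial := by
  classical
  have hmaps : ∀ β : Fin n → Fin m, β ∈ univ → (univ.image β).card ∈ Finset.Icc 1 n := by
    intro β _
    rw [Finset.mem_Icc]
    constructor
    · exact Finset.card_pos.mpr ⟨β ⟨0, hn⟩, Finset.mem_image_of_mem β (mem_univ _)⟩
    · exact le_trans Finset.card_image_le (by simp)
  rw [← Finset.sum_fiberwise_of_maps_to hmaps F]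
  refine Finset.sum_congr rfl fun j hj => ?_
  rw [sum_inj_surj F j, mul_comm, mul_div_assoc,
    div_self (Nat.cast_ne_zero.mpr j.factorial_ne_zero), mul_one]

section Part2

variable {X : Type*} [Fintype X] [DecidableEq X]

lemma prodMeas_msMeas_count {m n : ℕ} (x : Fin m → X) (y : Fin n → X) :
    prodMeas (msMeas x) n y
      = ((univ.filter (fun β : Fin n → Fin m => x ∘ β = y)).card : ℝ) := by
  classical
  unfold prodMeas msMeas
  rw [← Nat.cast_prod]
  congr 1
  rw [← Fintype.card_piFinset]
  congr 1
  ext β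
  simp [Fintype.mem_piFinset, funext_iff, Function.comp]

lemma pairing_prodMeas_msMeas {m n : ℕ} (x : Fin m → X) (f : (Fin n → X) → ℝ) :
    pairing n (prodMeas (msMeas x) n) f = ∑ β : Fin n → Fin m, f (x ∘ β) := by
  classical
  rw [← Finset.sum_fiberwise_of_maps_to (g := fun β : Fin n → Fin m => x ∘ β)
      (t := (univ : Finset (Fin n → X))) (fun β _ => mem_univ _) (fun β => f (x ∘ β))]
  unfold pairing
  refine Finset.sum_congr rfl fun y _ => ?_
  rw [prodMeas_msMeas_count]
  have h : ∀ β ∈ univ.filter (fun β : Fin n → Fin m => x ∘ β = y), f (x ∘ β) = f y :=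
    fun β hβ => by rw [(Finset.mem_filter.mp hβ).2]
  rw [Finset.sum_congr rfl h, Finset.sum_const, nsmul_eq_mul, mul_comm]

lemma pairing_decomp {n : ℕ} (hn : 1 ≤ n) {m : ℕ} (x : Fin m → X) (f : (Fin n → X) → ℝ) :
    pairing n (prodMeas (msMeas x) n) f
      = ∑ j ∈ Finset.Icc 1 n, pairing j (ff (msMeas x) j) (Sop n j f) := by
  rw [pairing_prodMeas_msMeas, sum_maps_eq hn (fun β => f (x ∘ β))]
  refine Finset.sum_congr rfl fun j hj => ?_
  rw [pairing_ff x (Sop n j f), Finset.sum_div]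
  exact Finset.sum_congr rfl fun α _ => rfl

lemma poissonE_prodMeas (ω : X → ℝ) {n : ℕ} (hn : 1 ≤ n) (f : (Fin n → X) → ℝ) :
    poissonE ω (fun η => pairing n (prodMeas η n) f)
      = ∑ j ∈ Finset.Icc 1 n, pairing j (prodMeas ω j) (Sop n j f) := by
  unfold poissonE
  have hterm : ∀ m : ℕ, (1 / (m.factorial : ℝ)) *
      ∑ x : Fin m → X, pairing n (prodMeas (msMeas x) n) f * ∏ i, ω (x i)
      = ∑ j ∈ Finset.Icc 1 n,
          pairing j (prodMeas ω j) (Sop n j f) * expTerm (∑ a, ω a) j m := by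
    intro m
    have h1 : ∑ x : Fin m → X, pairing n (prodMeas (msMeas x) n) f * ∏ i, ω (x i)
        = ∑ j ∈ Finset.Icc 1 n,
            ∑ x : Fin m → X, pairing j (ff (msMeas x) j) (Sop n j f) * ∏ i, ω (x i) := by
      rw [Finset.sum_congr rfl fun x (_ : x ∈ univ) => by
        rw [pairing_decomp hn x f, Finset.sum_mul]]
      exact Finset.sum_comm
    rw [h1, Finset.mul_sum]
    exact Finset.sum_congr rfl fun j _ => term_eq ω j (Sop n j f) m
  rw [tsum_congr hterm, Summable.tsum_finsetSum (fun j _ => ((expTerm_summable _ j).mul_left _)),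
    Finset.mul_sum]
  refine Finset.sum_congr rfl fun j _ => ?_
  rw [tsum_mul_left, expTerm_tsum, mul_comm (pairing j (prodMeas ω j) (Sop n j f)), ← mul_assoc,
    ← Real.exp_add, neg_add_cancel, Real.exp_zero, one_mul]

end Part2

/-- the Poisson functional maps falling factorials to moments:
`E_ω(⟨(·)_k, g⟩) = ⟨ω^{⊗k}, g⟩` for every symmetric `g : X^k → ℝ`; consequently
`E_ω(⟨(·)^{⊗n}, f⟩) = Σ_{k=1}^{n} ⟨ω^{⊗k}, S(n,k)f⟩` for symmetric `f : X^n → ℝ`. -/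
theorem poisson_functional_falling_factorials
    {X : Type*} [Fintype X] [DecidableEq X] (ω : X → ℝ)
    {k : ℕ} (hk : 1 ≤ k) (g : (Fin k → X) → ℝ) (hg : IsSymmFun g)
    {n : ℕ} (hn : 1 ≤ n) (f : (Fin n → X) → ℝ) (hf : IsSymmFun f) :
    poissonE ω (fun η => pairing k (ff η k) g) = pairing k (prodMeas ω k) g
    ∧ poissonE ω (fun η => pairing n (prodMeas η n) f)
        = ∑ j ∈ Finset.Icc 1 n, pairing j (prodMeas ω j) (Sop n j f) := by
  exact ⟨poissonE_pairing_ff ω k g, poissonE_prodMeas ω hn f⟩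
end

section
/- (Laplace transform of the Poisson functional.) Let X be a finite set, ω a finitely supported signed measure on X, and ξ : X → ℝ. Then Σ_{n=0}^{∞} (1/n!) E_ω(m_ξ^{(n)}) = exp(⟨ω, e^{ξ} − 1⟩), where m_ξ^{(n)}(η) = ⟨η, ξ⟩^n and E_ω(p) = e^{−ω(X)} Σ_{m=0}^{∞} (1/m!) Σ_{x₁,…,x_m} p(δ_{x₁}+⋯+δ_{x_m}) ω({x₁})⋯ω({x_m}); here ⟨ω, e^{ξ}−1⟩ = Σ_x ω({x})(e^{ξ(x)}−1), and both series converge absolutely. -/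
open Finset

section AuxLemmas

lemma tsum_pow_div_fact (x : ℝ) : ∑' n : ℕ, x ^ n / n.factorial = Real.exp x := by
  rw [Real.exp_eq_exp_ℝ, NormedSpace.exp_eq_tsum_div]

lemma msMeas_pair {X : Type*} [Fintype X] [DecidableEq X] {m : ℕ} (x : Fin m → X) (ξ : X → ℝ) :
    ∑ a, msMeas x a * ξ a = ∑ i, ξ (x i) := by
  rw [← Finset.sum_fiberwise' Finset.univ x ξ]
  refine Finset.sum_congr rfl fun a _ => ?_
  rw [msMeas, Finset.sum_const, nsmul_eq_mul]

lemma abs_S_le {X : Type*} [Fintype X] [DecidableEq X] (ω ξ : X → ℝ) (m n : ℕ) :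
    |∑ x : Fin m → X, (∑ i, ξ (x i)) ^ n * ∏ i, ω (x i)| ≤
      ((Fintype.card X : ℝ) * ∑ a, |ω a|) ^ m * (m * ∑ a, |ξ a|) ^ n := by
  set C := ∑ a, |ξ a| with hCdef
  set B := ∑ a, |ω a| with hBdef
  have hC0 : (0:ℝ) ≤ C := Finset.sum_nonneg fun a _ => abs_nonneg _
  have hB0 : (0:ℝ) ≤ B := Finset.sum_nonneg fun a _ => abs_nonneg _
  have hterm : ∀ x : Fin m → X, |(∑ i, ξ (x i)) ^ n * ∏ i, ω (x i)| ≤ (m * C) ^ n * B ^ m := by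
    intro x
    rw [abs_mul, abs_pow]
    have h1 : |∑ i, ξ (x i)| ≤ (m : ℝ) * C := by
      calc |∑ i, ξ (x i)| ≤ ∑ i, |ξ (x i)| := Finset.abs_sum_le_sum_abs _ _
        _ ≤ ∑ _i : Fin m, C := Finset.sum_le_sum fun i _ =>
            Finset.single_le_sum (fun a _ => abs_nonneg (ξ a)) (Finset.mem_univ _)
        _ = (m : ℝ) * C := by simp [mul_comm]
    have h2 : |∏ i, ω (x i)| ≤ B ^ m := by
      calc |∏ i, ω (x i)| = ∏ i, |ω (x i)| := Finset.abs_prod _ _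
        _ ≤ ∏ _i : Fin m, B := Finset.prod_le_prod (fun _ _ => abs_nonneg _)
            (fun i _ => Finset.single_le_sum (fun a _ => abs_nonneg (ω a)) (Finset.mem_univ _))
        _ = B ^ m := by simp
    gcongr
  calc |∑ x : Fin m → X, (∑ i, ξ (x i)) ^ n * ∏ i, ω (x i)|
      ≤ ∑ x : Fin m → X, |(∑ i, ξ (x i)) ^ n * ∏ i, ω (x i)| :=
        Finset.abs_sum_le_sum_abs _ _
    _ ≤ ∑ _x : Fin m → X, (m * C) ^ n * B ^ m := Finset.sum_le_sum fun x _ => hterm x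
    _ = ((Fintype.card X : ℝ)) ^ m * ((m * C) ^ n * B ^ m) := by
        rw [Finset.sum_const, nsmul_eq_mul]
        simp [Fintype.card_fun]
    _ = ((Fintype.card X : ℝ) * B) ^ m * (m * C) ^ n := by ring

set_option maxHeartbeats 1000000 in
lemma g_summable (C D : ℝ) (hC : 0 ≤ C) (hD : 0 ≤ D) :
    Summable (fun p : ℕ × ℕ => D ^ p.1 / p.1.factorial * ((p.1 * C) ^ p.2 / p.2.factorial)) := by
  have hnn : ∀ p : ℕ × ℕ, 0 ≤ D ^ p.1 / p.1.factorial * ((p.1 * C) ^ p.2 / p.2.factorial) :=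
    fun p => by positivity
  apply (summable_prod_of_nonneg hnn).mpr
  constructor
  · intro m
    simp only
    exact (Real.summable_pow_div_factorial ((m : ℝ) * C)).mul_left _
  · simp only
    refine Summable.congr (f := fun m : ℕ => (D * Real.exp C) ^ m / m.factorial)
      (Real.summable_pow_div_factorial _) fun m => ?_
    rw [tsum_mul_left, tsum_pow_div_fact, Real.exp_nat_mul]
    simp only [mul_pow]
    ring

end AuxLemmas

/-- Laplace transform of the Poisson functional:
`Σ_{n=0}^{∞} (1/n!) E_ω(m_ξ^{(n)}) = exp(⟨ω, e^{ξ} − 1⟩)` where `m_ξ^{(n)}(η) = ⟨η,ξ⟩^n`,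
and both series (the one defining each `E_ω(m_ξ^{(n)})` and the outer one) converge
absolutely. -/
theorem poisson_laplace_transform
    {X : Type*} [Fintype X] [DecidableEq X] (ω ξ : X → ℝ) :
    (∀ n : ℕ, Summable (fun m : ℕ =>
        (1 / (m.factorial : ℝ)) *
          ∑ x : Fin m → X, (∑ a, msMeas x a * ξ a) ^ n * ∏ i, ω (x i)))
    ∧ Summable (fun n : ℕ =>
        (1 / (n.factorial : ℝ)) * poissonE ω (fun η => (∑ a, η a * ξ a) ^ n))
    ∧ (∑' n : ℕ, (1 / (n.factorial : ℝ)) * poissonE ω (fun η => (∑ a, η a * ξ a) ^ n))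
        = Real.exp (∑ x, ω x * (Real.exp (ξ x) - 1)) := by
  classical
  have hC0 : (0:ℝ) ≤ ∑ a, |ξ a| := Finset.sum_nonneg fun a _ => abs_nonneg _
  have hB0 : (0:ℝ) ≤ ∑ a, |ω a| := Finset.sum_nonneg fun a _ => abs_nonneg _
  set F : ℕ → ℕ → ℝ := fun m n =>
    1 / (m.factorial : ℝ) * (1 / (n.factorial : ℝ) *
      ∑ x : Fin m → X, (∑ i, ξ (x i)) ^ n * ∏ i, ω (x i)) with hFdef
  have hF : Summable (Function.uncurry F) := by
    refine Summable.of_norm_bounded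
      (g_summable (∑ a, |ξ a|) ((Fintype.card X : ℝ) * ∑ a, |ω a|) hC0
        (mul_nonneg (Nat.cast_nonneg _) hB0)) ?_
    rintro ⟨m, n⟩
    simp only
    have h1 := abs_S_le ω ξ m n
    have e1 : ‖Function.uncurry F (m, n)‖ = 1 / (m.factorial : ℝ) * (1 / (n.factorial : ℝ) *
        |∑ x : Fin m → X, (∑ i, ξ (x i)) ^ n * ∏ i, ω (x i)|) := by
      simp only [Function.uncurry, hFdef, Real.norm_eq_abs, abs_mul]
      rw [abs_of_nonneg (by positivity : (0:ℝ) ≤ 1 / (m.factorial:ℝ)),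
        abs_of_nonneg (by positivity : (0:ℝ) ≤ 1 / (n.factorial:ℝ))]
    rw [e1]
    calc 1 / (m.factorial : ℝ) * (1 / (n.factorial : ℝ) *
          |∑ x : Fin m → X, (∑ i, ξ (x i)) ^ n * ∏ i, ω (x i)|)
        ≤ 1 / (m.factorial : ℝ) * (1 / (n.factorial : ℝ) *
          (((Fintype.card X : ℝ) * ∑ a, |ω a|) ^ m * (m * ∑ a, |ξ a|) ^ n)) := by gcongr
      _ = ((Fintype.card X : ℝ) * ∑ a, |ω a|) ^ m / m.factorial *
            (((m : ℝ) * ∑ a, |ξ a|) ^ n / n.factorial) := by ring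
  have hFm : ∀ m, Summable (F m) := fun m => hF.prod_factor m
  have hFn : ∀ n, Summable (fun m => F m n) := fun n => hF.prod_symm.prod_factor n
  have claim1 : ∀ n : ℕ, Summable (fun m : ℕ =>
      (1 / (m.factorial : ℝ)) *
        ∑ x : Fin m → X, (∑ a, msMeas x a * ξ a) ^ n * ∏ i, ω (x i)) := by
    intro n
    refine ((hFn n).mul_left (n.factorial : ℝ)).congr fun m => ?_
    simp only [hFdef, msMeas_pair]
    have h1 : (n.factorial : ℝ) ≠ 0 := Nat.cast_ne_zero.mpr n.factorial_ne_zero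
    field_simp
  have hpe : ∀ n : ℕ, (1 / (n.factorial:ℝ)) * poissonE ω (fun η => (∑ a, η a * ξ a) ^ n)
      = Real.exp (-∑ x, ω x) * ∑' m, F m n := by
    intro n
    rw [poissonE]
    simp only [msMeas_pair]
    rw [mul_left_comm, ← tsum_mul_left]
    congr 1
    refine tsum_congr fun m => ?_
    simp only [hFdef]
    ring
  have claim2 : Summable (fun n : ℕ =>
      (1 / (n.factorial : ℝ)) * poissonE ω (fun η => (∑ a, η a * ξ a) ^ n)) := by
    refine ((hF.prod_symm.prod.mul_left (Real.exp (-∑ x, ω x)))).congr fun n => ?_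
    exact (hpe n).symm
  have hinner : ∀ m : ℕ, ∑' n, F m n
      = (∑ a, Real.exp (ξ a) * ω a) ^ m / m.factorial := by
    intro m
    calc ∑' n, F m n
        = 1 / (m.factorial : ℝ) * ∑' n, ∑ x : Fin m → X,
            (∑ i, ξ (x i)) ^ n / n.factorial * ∏ i, ω (x i) := by
          rw [← tsum_mul_left]
          refine tsum_congr fun n => ?_
          simp only [hFdef]
          congr 1
          rw [Finset.mul_sum]
          refine Finset.sum_congr rfl fun x _ => ?_
          ring
      _ = 1 / (m.factorial : ℝ) * ∑ x : Fin m → X, ∑' n : ℕ,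
            (∑ i, ξ (x i)) ^ n / n.factorial * ∏ i, ω (x i) := by
          congr 1
          refine Summable.tsum_finsetSum fun x _ => ?_
          exact (Real.summable_pow_div_factorial _).mul_right _
      _ = 1 / (m.factorial : ℝ) * ∑ x : Fin m → X, ∏ i, (Real.exp (ξ (x i)) * ω (x i)) := by
          congr 1
          refine Finset.sum_congr rfl fun x _ => ?_
          rw [tsum_mul_right, tsum_pow_div_fact, Real.exp_sum, ← Finset.prod_mul_distrib]
      _ = (∑ a, Real.exp (ξ a) * ω a) ^ m / m.factorial := by
          rw [Finset.sum_pow', Fintype.piFinset_univ]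
          ring
  refine ⟨claim1, claim2, ?_⟩
  calc ∑' n : ℕ, (1 / (n.factorial : ℝ)) * poissonE ω (fun η => (∑ a, η a * ξ a) ^ n)
      = ∑' n : ℕ, Real.exp (-∑ x, ω x) * ∑' m, F m n := tsum_congr hpe
    _ = Real.exp (-∑ x, ω x) * ∑' n, ∑' m, F m n := tsum_mul_left
    _ = Real.exp (-∑ x, ω x) * ∑' m, ∑' n, F m n := by
        rw [Summable.tsum_comm' hF hFm hFn]
    _ = Real.exp (-∑ x, ω x) * ∑' m, (∑ a, Real.exp (ξ a) * ω a) ^ m / m.factorial := by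
        rw [tsum_congr hinner]
    _ = Real.exp (-∑ x, ω x) * Real.exp (∑ a, Real.exp (ξ a) * ω a) := by
        rw [tsum_pow_div_fact]
    _ = Real.exp (∑ x, ω x * (Real.exp (ξ x) - 1)) := by
        rw [← Real.exp_add]
        congr 1
        rw [neg_add_eq_sub, ← Finset.sum_sub_distrib]
        exact Finset.sum_congr rfl fun a _ => by ring
end

section
/- (Recurrence for Touchard measures.) For a finite set X, a finitely supported signed measure ω on X, and n ≥ 0, define the Touchard measure T_n(ω) on X^n by T_n(ω) = Σ_{k=1}^{n} Σ_{λ={λ₁,…,λ_k}∈UP(n,k)} Sym(ω^{[|λ₁|]} ⊗ ⋯ ⊗ ω^{[|λ_k|]}), where ω^{[i]} is the diagonal measure on X^i given by ω^{[i]}(dy₁⋯dy_i) = ω(dy₁)δ_{y₁}(dy₂)⋯δ_{y₁}(dy_i), and T_0(ω) := 1. Then T_{n+1}(ω) = Σ_{k=0}^{n} C(n,k) · Sym(T_k(ω) ⊗ ω^{[n+1−k]}). -/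
open Finset

/-- The diagonal measure `ω^{[i]}` on `X^i`:
`ω^{[i]}(dy₁⋯dy_i) = ω(dy₁)δ_{y₁}(dy₂)⋯δ_{y₁}(dy_i)` (with `ω^{[0]} := 1`). -/
noncomputable def diagMeas {X : Type*} [DecidableEq X] (ω : X → ℝ) (i : ℕ) :
    (Fin i → X) → ℝ :=
  fun y => if h : 0 < i then
      ω (y ⟨0, h⟩) * ∏ t, (if y t = y ⟨0, h⟩ then (1 : ℝ) else 0)
    else 1

/-- The Touchard measure `T_n(ω) = Σ_{k=1}^{n} Σ_{λ={λ₁,…,λ_k}∈UP(n,k)}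
Sym(ω^{[|λ₁|]} ⊗ ⋯ ⊗ ω^{[|λ_k|]})` on `X^n` (with `T_0(ω) := 1`): summing over
unordered partitions into `k` blocks is realized by summing over surjections
`g : Fin n → Fin k` (labelled blocks) and dividing by `k!`; the measure attached to `g`
is the pushforward of `ω^{⊗k}` under the diagonal embedding determined by `g`, i.e. the
product of the diagonal measures over the blocks of `g`. -/
noncomputable def touchardMeas {X : Type*} [Fintype X] [DecidableEq X]
    (ω : X → ℝ) (n : ℕ) : (Fin n → X) → ℝ :=
  fun y => if n = 0 then 1 else
    ∑ k ∈ Finset.Icc 1 n,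
      (∑ g ∈ surjs n k, ∑ v : Fin k → X,
          (∏ i, ω (v i)) * ∏ j, (if y j = v (g j) then (1 : ℝ) else 0)) / k.factorial


section Aux

open Finset

variable {X : Type*} [Fintype X] [DecidableEq X]

/-- The weight attached to a map `g : Fin N → Fin K`. -/
noncomputable def Wm (ω : X → ℝ) {N K : ℕ} (g : Fin N → Fin K) (y : Fin N → X) : ℝ :=
  ∑ v : Fin K → X, (∏ i, ω (v i)) * ∏ j, (if y j = v (g j) then (1:ℝ) else 0)

lemma Wm_relabel (ω : X → ℝ) {N K : ℕ} (σ : Equiv.Perm (Fin K)) (g : Fin N → Fin K)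
    (y : Fin N → X) : Wm ω (σ ∘ g) y = Wm ω g y := by
  unfold Wm
  refine Fintype.sum_equiv (Equiv.arrowCongr σ (Equiv.refl X)).symm _ _ ?_
  intro v
  congr 1
  exact (Fintype.prod_equiv σ (fun i => ω (v (σ i))) (fun i => ω (v i)) (fun i => rfl)).symm

lemma Wm_reindex (ω : X → ℝ) {N M K : ℕ} (e : Fin N ≃ Fin M) (g : Fin M → Fin K)
    (y : Fin N → X) : Wm ω (g ∘ e) y = Wm ω g (y ∘ e.symm) := by
  unfold Wm
  apply Finset.sum_congr rfl
  intro v _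
  congr 1
  refine Fintype.prod_equiv e _ _ (fun j => ?_)
  simp [Function.comp]

lemma Wm_comp_equiv (ω : X → ℝ) {M N K : ℕ} (e : Fin M ≃ Fin N) (g : Fin M → Fin K)
    (y : Fin N → X) : Wm ω g (fun i => y (e i)) = Wm ω (g ∘ e.symm) y := by
  have h2 : y ∘ ⇑e.symm.symm = fun i => y (e i) := by funext i; simp
  rw [Wm_reindex ω e.symm g y, h2]

end Aux

section PermCount

def permFiberEquiv {α β : Type*} [DecidableEq β] (F G : α → β) :
    {π : Equiv.Perm α // F ∘ π = G} ≃ ∀ i : β, {a // G a = i} ≃ {a // F a = i} where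
  toFun := fun p i =>
    { toFun := fun a => ⟨p.1 a.1, by
        have h := congrFun p.2 a.1
        simp only [Function.comp_apply] at h
        rw [h]; exact a.2⟩
      invFun := fun a => ⟨p.1.symm a.1, by
        have h := congrFun p.2 (p.1.symm a.1)
        simp only [Function.comp_apply, Equiv.apply_symm_apply] at h
        rw [← h]; exact a.2⟩
      left_inv := fun a => Subtype.ext (p.1.symm_apply_apply a.1)
      right_inv := fun a => Subtype.ext (p.1.apply_symm_apply a.1) }
  invFun := fun σ =>
    ⟨(Equiv.sigmaFiberEquiv G).symm.trans ((Equiv.sigmaCongrRight σ).trans (Equiv.sigmaFiberEquiv F)),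
      by funext a; exact ((σ (G a)) ⟨a, rfl⟩).2⟩
  left_inv := fun p => Subtype.ext (Equiv.ext fun a => rfl)
  right_inv := fun σ => by
    funext i
    ext a
    obtain ⟨a, ha⟩ := a
    subst ha
    rfl

lemma card_perm_fiber {α β : Type*} [Fintype α] [DecidableEq α] [Fintype β] [DecidableEq β]
    (F G : α → β) (h : ∀ i, Fintype.card {a // G a = i} = Fintype.card {a // F a = i}) :
    Fintype.card {π : Equiv.Perm α // F ∘ π = G}
      = ∏ i : β, (Fintype.card {a // F a = i}).factorial := by
  rw [Fintype.card_congr (permFiberEquiv F G), Fintype.card_pi]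
  exact Finset.prod_congr rfl fun i _ =>
    by rw [Fintype.card_equiv (Fintype.equivOfCardEq (h i)), h i]

lemma card_perm_fiber_zero {α β : Type*} [Fintype α] [DecidableEq α] [Fintype β] [DecidableEq β]
    (F G : α → β) (i0 : β) (h : Fintype.card {a // G a = i0} ≠ Fintype.card {a // F a = i0}) :
    Fintype.card {π : Equiv.Perm α // F ∘ π = G} = 0 := by
  rw [Fintype.card_congr (permFiberEquiv F G)]
  rw [Fintype.card_eq_zero_iff]
  exact ⟨fun σ => h (Fintype.card_congr (σ i0))⟩

lemma card_perm_pred {N : ℕ} (P Q : Fin N → Prop) [DecidablePred P] [DecidablePred Q] :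
    (Finset.univ.filter (fun π : Equiv.Perm (Fin N) => ∀ j, (P (π j) ↔ Q j))).card
      = if (Finset.univ.filter P).card = (Finset.univ.filter Q).card then
          (Finset.univ.filter Q).card.factorial * (N - (Finset.univ.filter Q).card).factorial
        else 0 := by
  classical
  set F : Fin N → Bool := fun a => decide (P a) with hF
  set G : Fin N → Bool := fun j => decide (Q j) with hG
  have hfilt : (Finset.univ.filter (fun π : Equiv.Perm (Fin N) => ∀ j, (P (π j) ↔ Q j)))
      = Finset.univ.filter (fun π : Equiv.Perm (Fin N) => F ∘ π = G) := by
    apply Finset.filter_congr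
    intro π _
    constructor
    · intro h; funext j; simp only [hF, hG, Function.comp_apply, decide_eq_decide]; exact h j
    · intro h j
      have := congrFun h j
      simp only [hF, hG, Function.comp_apply, decide_eq_decide] at this
      exact this
  rw [hfilt]
  have hcard : (Finset.univ.filter (fun π : Equiv.Perm (Fin N) => F ∘ π = G)).card
      = Fintype.card {π : Equiv.Perm (Fin N) // F ∘ π = G} := (Fintype.card_subtype _).symm
  rw [hcard]
  have cFt : Fintype.card {a // F a = true} = (Finset.univ.filter P).card := by
    rw [Fintype.card_subtype]; congr 1; apply Finset.filter_congr; intro a _; simp [hF]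
  have cGt : Fintype.card {a // G a = true} = (Finset.univ.filter Q).card := by
    rw [Fintype.card_subtype]; congr 1; apply Finset.filter_congr; intro a _; simp [hG]
  have cFf : Fintype.card {a // F a = false} = N - (Finset.univ.filter P).card := by
    rw [Fintype.card_subtype, ← cFt, Fintype.card_subtype]
    have := Finset.card_filter_add_card_filter_not
      (s := (Finset.univ : Finset (Fin N))) (p := fun a => F a = true)
    simp only [Finset.card_univ, Fintype.card_fin] at this
    have h2 : (Finset.univ.filter (fun a => F a = false)).card
        = (Finset.univ.filter (fun a => ¬ (F a = true))).card := by
      congr 1; apply Finset.filter_congr; intro a _; simp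
    omega
  have cGf : Fintype.card {a // G a = false} = N - (Finset.univ.filter Q).card := by
    rw [Fintype.card_subtype, ← cGt, Fintype.card_subtype]
    have := Finset.card_filter_add_card_filter_not
      (s := (Finset.univ : Finset (Fin N))) (p := fun a => G a = true)
    simp only [Finset.card_univ, Fintype.card_fin] at this
    have h2 : (Finset.univ.filter (fun a => G a = false)).card
        = (Finset.univ.filter (fun a => ¬ (G a = true))).card := by
      congr 1; apply Finset.filter_congr; intro a _; simp
    omega
  by_cases hc : (Finset.univ.filter P).card = (Finset.univ.filter Q).card
  · rw [if_pos hc]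
    rw [card_perm_fiber F G]
    · rw [Fintype.prod_bool, cFt, cFf, hc, Nat.mul_comm]
    · intro b
      cases b
      · rw [cFf, cGf, hc]
      · rw [cFt, cGt, hc]
  · rw [if_neg hc]
    exact card_perm_fiber_zero F G true (by rw [cFt, cGt]; omega)

lemma card_filter_le_val {N k : ℕ} (hk : k ≤ N) :
    (Finset.univ.filter (fun j : Fin N => k ≤ (j : ℕ))).card = N - k := by
  have : (Finset.univ.filter (fun j : Fin N => k ≤ (j : ℕ)))
      = Finset.map ⟨fun i : Fin (N - k) => (⟨(i : ℕ) + k, by have := i.isLt; omega⟩ : Fin N),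
          (show Function.Injective _ from fun a b hab => by
            have : (a : ℕ) + k = (b : ℕ) + k := congrArg Fin.val hab
            exact Fin.ext (by omega))⟩ Finset.univ := by
    ext j
    simp only [Finset.mem_filter, Finset.mem_univ, true_and, Finset.mem_map,
      Function.Embedding.coeFn_mk]
    constructor
    · intro hj
      exact ⟨⟨(j : ℕ) - k, by have := j.isLt; omega⟩, Fin.ext (by simp; omega)⟩
    · rintro ⟨i, rfl⟩
      simp
  rw [this, Finset.card_map, Finset.card_univ, Fintype.card_fin]

lemma count_perm {N l k : ℕ} (hk : k ≤ N) (G : Fin N → Fin (l+1)) :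
    (Finset.univ.filter (fun π : Equiv.Perm (Fin N) =>
        ∀ j : Fin N, (G (π j) = 0 ↔ k ≤ (j:ℕ)))).card
      = if fiberCard G 0 = N - k then (N-k).factorial * k.factorial else 0 := by
  classical
  have h := card_perm_pred (fun a => G a = 0) (fun j : Fin N => k ≤ (j:ℕ))
  rw [card_filter_le_val hk] at h
  have hNk : N - (N - k) = k := by omega
  rw [hNk] at h
  exact h

end PermCount

section CombSection

def combX {k l : ℕ} (m : ℕ) (h : Fin k → Fin l) : Fin (k + m) → Fin (l + 1) :=
  Fin.append (fun a => (h a).succ) (fun _ => 0)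

lemma combX_castAdd {k l m : ℕ} (h : Fin k → Fin l) (a : Fin k) :
    combX m h (Fin.castAdd m a) = (h a).succ := Fin.append_left _ _ _

lemma combX_natAdd {k l m : ℕ} (h : Fin k → Fin l) (b : Fin m) :
    combX m h (Fin.natAdd k b) = 0 := Fin.append_right _ _ _

lemma combX_surj {k l m : ℕ} (hm : 0 < m) {h : Fin k → Fin l} (hs : Function.Surjective h) :
    Function.Surjective (combX m h) := by
  intro c
  induction c using Fin.cases with
  | zero => exact ⟨Fin.natAdd k ⟨0, hm⟩, combX_natAdd h _⟩
  | succ b =>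
      obtain ⟨a, ha⟩ := hs b
      exact ⟨Fin.castAdd m a, by rw [combX_castAdd, ha]⟩

variable {X : Type*} [Fintype X] [DecidableEq X]

lemma sum_comb_eq (ω : X → ℝ) {k m l N : ℕ}
    (hm : 0 < m) (e : Fin (k + m) ≃ Fin N) (y : Fin N → X) :
    ∑ h ∈ surjs k l, Wm ω (combX m h ∘ e.symm) y
      = ∑ G ∈ (surjs N (l+1)).filter
          (fun G => ∀ i : Fin (k+m), (G (e i) = 0 ↔ k ≤ (i:ℕ))), Wm ω G y := by
  classical
  refine Finset.sum_bij' (fun h _ => combX m h ∘ e.symm)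
    (fun G hG => fun a => (G (e (Fin.castAdd m a))).pred (by
      have hc := (Finset.mem_filter.mp hG).2 (Fin.castAdd m a)
      simp only [Fin.coe_castAdd] at hc
      intro h0
      exact absurd (hc.mp h0) (by have := a.isLt; omega)))
    ?_ ?_ ?_ ?_ ?_
  · intro h hh
    have hs : Function.Surjective h := (Finset.mem_filter.mp hh).2
    refine Finset.mem_filter.mpr ⟨Finset.mem_filter.mpr ⟨Finset.mem_univ _, ?_⟩, ?_⟩
    · exact (combX_surj hm hs).comp e.symm.surjective
    · intro i
      simp only [Function.comp_apply, Equiv.symm_apply_apply]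
      refine i.addCases (fun a => ?_) (fun b => ?_)
      · rw [combX_castAdd]
        simp only [Fin.coe_castAdd]
        constructor
        · intro h0; exact absurd h0 (Fin.succ_ne_zero _)
        · intro hk; exact absurd hk (by have := a.isLt; omega)
      · rw [combX_natAdd]
        simp only [Fin.coe_natAdd]
        constructor
        · intro _; omega
        · intro _; trivial
  · intro G hG
    obtain ⟨hGs, hcond⟩ := Finset.mem_filter.mp hG
    have hsurj : Function.Surjective G := (Finset.mem_filter.mp hGs).2
    refine Finset.mem_filter.mpr ⟨Finset.mem_univ _, ?_⟩
    intro b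
    obtain ⟨j0, hj0⟩ := hsurj b.succ
    have hi := hcond (e.symm j0)
    rw [e.apply_symm_apply] at hi
    have hlt : ((e.symm j0 : Fin (k+m)) : ℕ) < k := by
      by_contra hcon
      rw [hj0] at hi
      exact Fin.succ_ne_zero b (hi.mpr (by omega))
    refine ⟨⟨((e.symm j0 : Fin (k+m)) : ℕ), hlt⟩, ?_⟩
    have hcast : Fin.castAdd m (⟨((e.symm j0 : Fin (k+m)) : ℕ), hlt⟩ : Fin k) = e.symm j0 :=
      Fin.ext rfl
    apply Fin.succ_injective
    rw [Fin.succ_pred, hcast, Equiv.apply_symm_apply, hj0]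
  · intro h hh
    funext a
    simp only [Function.comp_apply, Equiv.symm_apply_apply, combX_castAdd, Fin.pred_succ]
  · intro G hG
    obtain ⟨hGs, hcond⟩ := Finset.mem_filter.mp hG
    funext j
    have hj : j = e (e.symm j) := (e.apply_symm_apply j).symm
    rw [hj]
    generalize (e.symm j) = i
    simp only [Function.comp_apply, Equiv.symm_apply_apply]
    refine i.addCases (fun a => ?_) (fun b => ?_)
    · rw [combX_castAdd, Fin.succ_pred]
    · rw [combX_natAdd]
      exact ((hcond (Fin.natAdd k b)).mpr (by simp [Fin.coe_natAdd])).symm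
  · intro h hh
    rfl

lemma Wm_tensor (ω : X → ℝ) {k l m : ℕ} (h : Fin k → Fin l) (z : Fin (k + m) → X) :
    Wm ω (combX m h) z
      = Wm ω h (fun a => z (Fin.castAdd m a))
        * Wm ω (fun _ : Fin m => (0 : Fin 1)) (fun b => z (Fin.natAdd k b)) := by
  unfold Wm
  rw [Finset.sum_mul_sum]
  rw [← Equiv.sum_comp (Fin.consEquiv (fun _ : Fin (l+1) => X))]
  rw [Fintype.sum_prod_type]
  rw [Finset.sum_comm]
  refine Finset.sum_congr rfl fun w _ => ?_
  refine Fintype.sum_equiv (Equiv.funUnique (Fin 1) X).symm _ _ fun a => ?_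
  have e1 : (∏ i : Fin (l+1), ω (Fin.consEquiv (fun _ : Fin (l+1) => X) (a, w) i))
      = ω a * ∏ i : Fin l, ω (w i) := by
    rw [Fin.prod_univ_succ]
    simp [Fin.consEquiv]
  have e2 : (∏ j : Fin (k+m),
        (if z j = Fin.consEquiv (fun _ : Fin (l+1) => X) (a, w) (combX m h j) then (1:ℝ) else 0))
      = (∏ a' : Fin k, if z (Fin.castAdd m a') = w (h a') then (1:ℝ) else 0)
        * ∏ b : Fin m, if z (Fin.natAdd k b) = a then (1:ℝ) else 0 := by
    rw [Fin.prod_univ_add]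
    congr 1
    · refine Finset.prod_congr rfl fun a' _ => ?_
      rw [combX_castAdd]
      simp [Fin.consEquiv]
    · refine Finset.prod_congr rfl fun b _ => ?_
      rw [combX_natAdd]
      simp [Fin.consEquiv]
  rw [e1, e2]
  have e3 : (∏ i : Fin 1, ω (((Equiv.funUnique (Fin 1) X).symm a) i)) = ω a := by
    simp [Equiv.funUnique]
  have e4 : ∀ b : Fin m,
      (if z (Fin.natAdd k b) = ((Equiv.funUnique (Fin 1) X).symm a)
          ((fun _ : Fin m => (0 : Fin 1)) b) then (1:ℝ) else 0)
        = (if z (Fin.natAdd k b) = a then (1:ℝ) else 0) := by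
    intro b; rfl
  rw [e3]
  simp only [e4]
  ring

lemma diag_eq_Wm (ω : X → ℝ) {m : ℕ} (hm : 0 < m) (u : Fin m → X) :
    diagMeas ω m u = Wm ω (fun _ : Fin m => (0 : Fin 1)) u := by
  unfold diagMeas Wm
  rw [dif_pos hm]
  rw [← Equiv.sum_comp (Equiv.funUnique (Fin 1) X).symm]
  rw [Finset.sum_eq_single (u ⟨0, hm⟩)]
  · simp [Equiv.funUnique]
  · intro a _ hne
    have : (∏ j : Fin m, if u j = ((Equiv.funUnique (Fin 1) X).symm a)
        ((fun _ : Fin m => (0 : Fin 1)) j) then (1:ℝ) else 0) = 0 := by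
      refine Finset.prod_eq_zero (Finset.mem_univ (⟨0, hm⟩ : Fin m)) ?_
      rw [if_neg]
      intro hcon
      exact hne (by simpa [Equiv.funUnique] using hcon.symm)
    rw [this, mul_zero]
  · intro hni
    exact absurd (Finset.mem_univ _) hni

lemma touchard_eq_Wm (ω : X → ℝ) (K : ℕ) (u : Fin K → X) :
    touchardMeas ω K u
      = ∑ l ∈ Finset.range (K+1), (∑ h ∈ surjs K l, Wm ω h u) / l.factorial := by
  classical
  unfold touchardMeas
  by_cases hK : K = 0
  · subst hK
    rw [if_pos rfl]
    rw [Finset.sum_range_one]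
    have h1 : surjs 0 0 = Finset.univ := by
      unfold surjs
      apply Finset.filter_true_of_mem
      intro g _ i
      exact i.elim0
    rw [h1]
    unfold Wm
    simp
  · rw [if_neg hK]
    rw [Finset.sum_range_succ']
    have h0 : surjs K 0 = ∅ := by
      apply Finset.eq_empty_of_forall_notMem
      intro g hg
      exact (g ⟨0, Nat.pos_of_ne_zero hK⟩).elim0
    rw [h0]
    simp only [Finset.sum_empty, zero_div, add_zero]
    have hIcc : Finset.Icc 1 K = Finset.Ico 1 (K+1) := by
      rw [Finset.Ico_add_one_right_eq_Icc]
    rw [hIcc, Finset.sum_Ico_eq_sum_range]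
    simp only [Nat.add_sub_cancel]
    refine Finset.sum_congr rfl fun l _ => ?_
    rw [Nat.add_comm 1 l]
    rfl

end CombSection

section FiberFacts

lemma fiber_pos {N K : ℕ} {G : Fin N → Fin K} (hs : Function.Surjective G) (i : Fin K) :
    0 < fiberCard G i := by
  obtain ⟨a, ha⟩ := hs i
  exact Finset.card_pos.mpr ⟨a, Finset.mem_filter.mpr ⟨Finset.mem_univ _, ha⟩⟩

lemma sum_fiberCard {N K : ℕ} (G : Fin N → Fin K) :
    ∑ i : Fin K, fiberCard G i = N := by
  have h := Finset.card_eq_sum_card_fiberwise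
    (f := G) (s := Finset.univ) (t := Finset.univ) (fun x _ => Finset.mem_univ (G x))
  rw [Finset.card_univ, Fintype.card_fin] at h
  exact h.symm

lemma fiber_zero_le {N l : ℕ} {G : Fin N → Fin (l+1)} (hs : Function.Surjective G) :
    fiberCard G 0 ≤ N - l := by
  have hsum := sum_fiberCard G
  have hsplit : fiberCard G 0 + ∑ i ∈ Finset.univ.erase (0 : Fin (l+1)), fiberCard G i = N := by
    rw [Finset.add_sum_erase _ _ (Finset.mem_univ _)]
    exact hsum
  have hle : (Finset.univ.erase (0 : Fin (l+1))).card • 1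
      ≤ ∑ i ∈ Finset.univ.erase (0 : Fin (l+1)), fiberCard G i :=
    Finset.card_nsmul_le_sum _ _ _ (fun i _ => fiber_pos hs i)
  have hcard : (Finset.univ.erase (0 : Fin (l+1))).card = l := by
    rw [Finset.card_erase_of_mem (Finset.mem_univ _), Finset.card_univ, Fintype.card_fin]
    omega
  rw [hcard] at hle
  simp only [smul_eq_mul, mul_one] at hle
  omega

end FiberFacts

section Relabel

variable {X : Type*} [Fintype X] [DecidableEq X]

lemma relabel_sum (ω : X → ℝ) {N l : ℕ} (y : Fin N → X) (i0 : Fin (l+1)) :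
    ∑ G ∈ surjs N (l+1), (fiberCard G i0 : ℝ) * Wm ω G y
      = ∑ G ∈ surjs N (l+1), (fiberCard G 0 : ℝ) * Wm ω G y := by
  classical
  refine Finset.sum_nbij' (fun G => (Equiv.swap (0 : Fin (l+1)) i0) ∘ G)
    (fun G => (Equiv.swap (0 : Fin (l+1)) i0) ∘ G) ?_ ?_ ?_ ?_ ?_
  · intro G hG
    exact Finset.mem_filter.mpr ⟨Finset.mem_univ _,
      (Equiv.surjective _).comp (Finset.mem_filter.mp hG).2⟩
  · intro G hG
    exact Finset.mem_filter.mpr ⟨Finset.mem_univ _,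
      (Equiv.surjective _).comp (Finset.mem_filter.mp hG).2⟩
  · intro G hG
    funext a
    simp [Equiv.swap_apply_self]
  · intro G hG
    funext a
    simp [Equiv.swap_apply_self]
  · intro G hG
    have h1 : Wm ω ((Equiv.swap (0 : Fin (l+1)) i0) ∘ G) y = Wm ω G y :=
      Wm_relabel ω _ G y
    have h2 : fiberCard ((Equiv.swap (0 : Fin (l+1)) i0) ∘ G) 0 = fiberCard G i0 := by
      unfold fiberCard
      congr 1
      apply Finset.filter_congr
      intro a _
      simp only [Function.comp_apply]
      constructor
      · intro hsw
        have := congrArg (Equiv.swap (0 : Fin (l+1)) i0) hsw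
        rwa [Equiv.swap_apply_self, Equiv.swap_apply_left] at this
      · intro hGa
        rw [hGa, Equiv.swap_apply_right]
    rw [h1, h2]

lemma fiber_weighted_sum (ω : X → ℝ) {N l : ℕ} (y : Fin N → X) :
    ((l : ℝ) + 1) * ∑ G ∈ surjs N (l+1), (fiberCard G 0 : ℝ) * Wm ω G y
      = (N : ℝ) * ∑ G ∈ surjs N (l+1), Wm ω G y := by
  classical
  have h1 : ∀ i0 : Fin (l+1),
      ∑ G ∈ surjs N (l+1), (fiberCard G i0 : ℝ) * Wm ω G y
        = ∑ G ∈ surjs N (l+1), (fiberCard G 0 : ℝ) * Wm ω G y :=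
    fun i0 => relabel_sum ω y i0
  have h2 : ∑ i0 : Fin (l+1), ∑ G ∈ surjs N (l+1), (fiberCard G i0 : ℝ) * Wm ω G y
      = ((l : ℝ) + 1) * ∑ G ∈ surjs N (l+1), (fiberCard G 0 : ℝ) * Wm ω G y := by
    calc ∑ i0 : Fin (l+1), ∑ G ∈ surjs N (l+1), (fiberCard G i0 : ℝ) * Wm ω G y
        = ∑ _i0 : Fin (l+1), ∑ G ∈ surjs N (l+1), (fiberCard G 0 : ℝ) * Wm ω G y :=
          Finset.sum_congr rfl (fun i0 _ => h1 i0)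
      _ = ((l : ℝ) + 1) * ∑ G ∈ surjs N (l+1), (fiberCard G 0 : ℝ) * Wm ω G y := by
          rw [Finset.sum_const, Finset.card_univ, Fintype.card_fin, nsmul_eq_mul]
          push_cast
          ring
  rw [← h2]
  rw [show (∑ i0 : Fin (l+1), ∑ G ∈ surjs N (l+1), (fiberCard G i0 : ℝ) * Wm ω G y)
      = ∑ G ∈ surjs N (l+1), ∑ i0 : Fin (l+1), (fiberCard G i0 : ℝ) * Wm ω G y from
    Finset.sum_comm]
  rw [Finset.mul_sum]
  refine Finset.sum_congr rfl fun G hG => ?_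
  rw [← Finset.sum_mul]
  congr 1
  exact_mod_cast sum_fiberCard G

end Relabel

section KsumCollapse

lemma ksum_collapse {n l : ℕ} (hln : l ≤ n) {c : ℕ} (hc1 : 1 ≤ c) (hc2 : c ≤ n + 1 - l) :
    ∑ k ∈ Finset.Icc l n, (n.choose k : ℝ)
        * (if c = n + 1 - k then (((n+1-k).factorial * k.factorial : ℕ) : ℝ) else 0)
      = (n.factorial : ℝ) * c := by
  rw [Finset.sum_eq_single (n + 1 - c)]
  · have hk : n + 1 - c ≤ n := by omega
    rw [if_pos (by omega)]
    have h2 : n + 1 - (n + 1 - c) = c := by omega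
    rw [h2]
    have h3 := Nat.choose_mul_factorial_mul_factorial hk
    have h4 : n - (n+1-c) = c - 1 := by omega
    have h5 : c.factorial = c * (c-1).factorial := by
      cases c with
      | zero => omega
      | succ c' => simp [Nat.factorial_succ]
    have key : n.choose (n+1-c) * (c.factorial * (n+1-c).factorial) = n.factorial * c := by
      calc n.choose (n+1-c) * (c.factorial * (n+1-c).factorial)
          = c * (n.choose (n+1-c) * (n+1-c).factorial * (n - (n+1-c)).factorial) := by
            rw [h4, h5]; ring
        _ = c * n.factorial := by rw [h3]
        _ = n.factorial * c := Nat.mul_comm _ _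
    rw [← Nat.cast_mul, key, Nat.cast_mul]
  · intro k hk hne
    rw [if_neg (by have := Finset.mem_Icc.mp hk; omega), mul_zero]
  · intro hni
    exact absurd (Finset.mem_Icc.mpr ⟨by omega, by omega⟩) hni

end KsumCollapse

/-- recurrence for the Touchard measures:
`T_{n+1}(ω) = Σ_{k=0}^{n} C(n,k) · Sym(T_k(ω) ⊗ ω^{[n+1−k]})`. -/
theorem touchard_recurrence
    {X : Type*} [Fintype X] [DecidableEq X] (ω : X → ℝ) (n : ℕ) (y : Fin (n + 1) → X) :
    touchardMeas ω (n + 1) y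
      = ∑ k ∈ (Finset.range (n + 1)).attach,
          (n.choose k.1 : ℝ) *
            symmFun (n + 1)
              (castFun (by have := Finset.mem_range.mp k.2; omega)
                (tensFun (touchardMeas ω k.1) (diagMeas ω (n + 1 - k.1)))) y := by
  classical
  have hN0 : (0:ℕ) < n + 1 := Nat.succ_pos n
  -- abbreviations
  set A : ℕ → ℝ := fun l => ∑ G ∈ surjs (n+1) (l+1), Wm ω G y with hA
  -- the left-hand side
  have hLHS : touchardMeas ω (n+1) y
      = ∑ l ∈ Finset.range (n+1), A l / ((l+1).factorial : ℝ) := by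
    rw [touchard_eq_Wm]
    rw [Finset.sum_range_succ']
    have h0 : surjs (n+1) 0 = ∅ := by
      apply Finset.eq_empty_of_forall_notMem
      intro g hg
      exact (g ⟨0, hN0⟩).elim0
    rw [h0]
    simp only [Finset.sum_empty, zero_div, add_zero]
    rfl
  -- proof-free form of the right-hand side summand
  have hR1 : (∑ k ∈ (Finset.range (n + 1)).attach,
        (n.choose k.1 : ℝ) *
          symmFun (n + 1)
            (castFun (by have := Finset.mem_range.mp k.2; omega)
              (tensFun (touchardMeas ω k.1) (diagMeas ω (n + 1 - k.1)))) y)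
      = ∑ k ∈ Finset.range (n+1), (if hk : k + (n+1-k) = n+1 then
          (n.choose k : ℝ) * symmFun (n + 1)
            (castFun hk (tensFun (touchardMeas ω k) (diagMeas ω (n + 1 - k)))) y
          else 0) := by
    rw [← Finset.sum_attach (Finset.range (n+1)) (fun k => if hk : k + (n+1-k) = n+1 then
          (n.choose k : ℝ) * symmFun (n + 1)
            (castFun hk (tensFun (touchardMeas ω k) (diagMeas ω (n + 1 - k)))) y
          else 0)]
    refine Finset.sum_congr rfl fun k _ => ?_
    have hk : k.1 + (n+1-k.1) = n+1 := by have := Finset.mem_range.mp k.2; omega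
    rw [dif_pos hk]
  rw [hLHS, hR1]
  -- per-k expansion
  have hterm : ∀ k ∈ Finset.range (n+1), (if hk : k + (n+1-k) = n+1 then
          (n.choose k : ℝ) * symmFun (n + 1)
            (castFun hk (tensFun (touchardMeas ω k) (diagMeas ω (n + 1 - k)))) y
          else 0)
      = ∑ l ∈ Finset.range (k+1), (n.choose k : ℝ) *
          (∑ G ∈ surjs (n+1) (l+1),
            (if fiberCard G 0 = n+1-k then (((n+1-k).factorial * k.factorial : ℕ) : ℝ) else 0)
              * Wm ω G y)
          / (((n+1).factorial : ℝ) * (l.factorial : ℝ)) := by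
    intro k hkmem
    have hkn : k ≤ n := by have := Finset.mem_range.mp hkmem; omega
    have hadd : k + (n+1-k) = n+1 := by omega
    have hm : 0 < n+1-k := by omega
    rw [dif_pos hadd]
    unfold symmFun castFun
    -- rewrite each permutation term
    have hπ : ∀ π : Equiv.Perm (Fin (n+1)),
        tensFun (touchardMeas ω k) (diagMeas ω (n+1-k))
            (fun i => (y ∘ π) (Fin.cast hadd i))
          = ∑ l ∈ Finset.range (k+1),
              (∑ h ∈ surjs k l,
                Wm ω (combX (n+1-k) h ∘ ((finCongr hadd).trans π).symm) y)
                / (l.factorial : ℝ) := by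
      intro π
      unfold tensFun
      rw [touchard_eq_Wm, diag_eq_Wm ω hm]
      rw [Finset.sum_mul]
      refine Finset.sum_congr rfl fun l _ => ?_
      rw [div_mul_eq_mul_div]
      congr 1
      rw [Finset.sum_mul]
      refine Finset.sum_congr rfl fun h _ => ?_
      rw [← Wm_tensor ω h (fun i => (y ∘ π) (Fin.cast hadd i))]
      exact Wm_comp_equiv ω ((finCongr hadd).trans π) (combX (n+1-k) h) y
    rw [Finset.sum_congr rfl fun π (_ : π ∈ (Finset.univ : Finset (Equiv.Perm (Fin (n+1))))) => hπ π]
    rw [Finset.sum_comm]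
    rw [Finset.sum_div, Finset.mul_sum]
    refine Finset.sum_congr rfl fun l _ => ?_
    -- now handle the inner (π, h) double sum
    have hstep : ∀ π : Equiv.Perm (Fin (n+1)),
        (∑ h ∈ surjs k l, Wm ω (combX (n+1-k) h ∘ ((finCongr hadd).trans π).symm) y)
          = ∑ G ∈ surjs (n+1) (l+1),
              (if (∀ i : Fin (k + (n+1-k)), (G (((finCongr hadd).trans π) i) = 0 ↔ k ≤ (i:ℕ)))
                then Wm ω G y else 0) := by
      intro π
      rw [sum_comb_eq ω hm ((finCongr hadd).trans π) y]
      rw [Finset.sum_filter]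
    have hcnt : ∀ G : Fin (n+1) → Fin (l+1),
        ((Finset.univ.filter (fun π : Equiv.Perm (Fin (n+1)) =>
            ∀ i : Fin (k + (n+1-k)), (G (((finCongr hadd).trans π) i) = 0 ↔ k ≤ (i:ℕ)))).card)
          = if fiberCard G 0 = n+1-k then ((n+1-k).factorial * k.factorial) else 0 := by
      intro G
      have hfe : (Finset.univ.filter (fun π : Equiv.Perm (Fin (n+1)) =>
            ∀ i : Fin (k + (n+1-k)), (G (((finCongr hadd).trans π) i) = 0 ↔ k ≤ (i:ℕ))))
          = Finset.univ.filter (fun π : Equiv.Perm (Fin (n+1)) =>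
            ∀ j : Fin (n+1), (G (π j) = 0 ↔ k ≤ (j:ℕ))) := by
        apply Finset.filter_congr
        intro π _
        constructor
        · intro hc j
          have h1 : (finCongr hadd) (Fin.cast hadd.symm j) = j := Fin.ext rfl
          have := hc (Fin.cast hadd.symm j)
          simp only [Equiv.trans_apply, h1] at this
          exact this
        · intro hc i
          exact hc (((finCongr hadd)) i)
      rw [hfe]
      exact count_perm (by omega) G
    have hmid : (∑ π : Equiv.Perm (Fin (n+1)),
            (∑ h ∈ surjs k l, Wm ω (combX (n+1-k) h ∘ ((finCongr hadd).trans π).symm) y)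
              / (l.factorial : ℝ)) / ((n+1).factorial : ℝ)
        = (∑ G ∈ surjs (n+1) (l+1),
            (if fiberCard G 0 = n+1-k then (((n+1-k).factorial * k.factorial : ℕ) : ℝ) else 0)
              * Wm ω G y) / (((n+1).factorial : ℝ) * (l.factorial : ℝ)) := by
      rw [← Finset.sum_div, div_div]
      rw [Finset.sum_congr rfl fun π (_ : π ∈ (Finset.univ : Finset (Equiv.Perm (Fin (n+1))))) =>
        hstep π]
      rw [Finset.sum_comm]
      rw [show ((l.factorial : ℝ) * ((n+1).factorial : ℝ))
          = (((n+1).factorial : ℝ) * (l.factorial : ℝ)) from mul_comm _ _]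
      congr 1
      refine Finset.sum_congr rfl fun G _ => ?_
      rw [← Finset.sum_filter, Finset.sum_const, nsmul_eq_mul, hcnt G]
      rw [Nat.cast_ite]
      simp
    rw [hmid, mul_div_assoc]
  rw [Finset.sum_congr rfl hterm]
  have hcond : ∀ (k l : ℕ), k ∈ Finset.range (n+1) ∧ l ∈ Finset.range (k+1)
      ↔ k ∈ Finset.Icc l n ∧ l ∈ Finset.range (n+1) := by
    intro k l
    simp only [Finset.mem_range, Finset.mem_Icc]
    omega
  refine Eq.trans ?_ (Finset.sum_comm' hcond).symm
  refine Finset.sum_congr rfl fun l hl => ?_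
  have hln : l ≤ n := by have := Finset.mem_range.mp hl; omega
  rw [← Finset.sum_div]
  have hnum : (∑ k ∈ Finset.Icc l n, (n.choose k : ℝ) *
        ∑ G ∈ surjs (n+1) (l+1),
          (if fiberCard G 0 = n+1-k then (((n+1-k).factorial * k.factorial : ℕ) : ℝ) else 0)
            * Wm ω G y)
      = (n.factorial : ℝ) * ∑ G ∈ surjs (n+1) (l+1), (fiberCard G 0 : ℝ) * Wm ω G y := by
    rw [Finset.sum_congr rfl fun k (_ : k ∈ Finset.Icc l n) => Finset.mul_sum _ _ _]
    rw [Finset.sum_comm]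
    rw [Finset.mul_sum]
    refine Finset.sum_congr rfl fun G hG => ?_
    have hsurj : Function.Surjective G := (Finset.mem_filter.mp hG).2
    have hc1 : 1 ≤ fiberCard G 0 := fiber_pos hsurj 0
    have hc2 : fiberCard G 0 ≤ n + 1 - l := fiber_zero_le hsurj
    calc ∑ k ∈ Finset.Icc l n, (n.choose k:ℝ) *
          ((if fiberCard G 0 = n+1-k then (((n+1-k).factorial * k.factorial : ℕ):ℝ) else 0)
            * Wm ω G y)
        = (∑ k ∈ Finset.Icc l n, (n.choose k:ℝ) *
            (if fiberCard G 0 = n+1-k then (((n+1-k).factorial * k.factorial : ℕ):ℝ) else 0))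
            * Wm ω G y := by
          rw [Finset.sum_mul]
          exact Finset.sum_congr rfl fun k _ => by ring
      _ = ((n.factorial : ℝ) * (fiberCard G 0 : ℝ)) * Wm ω G y := by
          rw [ksum_collapse hln hc1 hc2]
      _ = (n.factorial : ℝ) * ((fiberCard G 0 : ℝ) * Wm ω G y) := by ring
  rw [hnum]
  have hB := fiber_weighted_sum ω (N := n+1) (l := l) y
  have hlf : ((l.factorial : ℕ) : ℝ) ≠ 0 := Nat.cast_ne_zero.mpr (Nat.factorial_ne_zero _)
  have hfl : (((l+1).factorial : ℕ) : ℝ) ≠ 0 := Nat.cast_ne_zero.mpr (Nat.factorial_ne_zero _)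
  have hfn : (((n+1).factorial : ℕ) : ℝ) ≠ 0 := Nat.cast_ne_zero.mpr (Nat.factorial_ne_zero _)
  rw [div_eq_div_iff hfl (mul_ne_zero hfn hlf)]
  have e1 : (((l+1).factorial : ℕ) : ℝ) = ((l:ℝ)+1) * (l.factorial : ℝ) := by
    rw [Nat.factorial_succ]; push_cast; ring
  have e2 : (((n+1).factorial : ℕ) : ℝ) = ((n:ℝ)+1) * (n.factorial : ℝ) := by
    rw [Nat.factorial_succ]; push_cast; ring
  rw [e1, e2]
  push_cast at hB
  linear_combination (-((n.factorial : ℝ) * (l.factorial : ℝ))) * hB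
end
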